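/- Let (E,ℒ,𝒜) be a weakly left-resolving, normal labelled space. Let (t,φ) ∈ Ω with t = (β,A,γ), and let ξ^α be the tight filter associated with φ, so that α = γα' for some α' ∈ ℒ^{≤∞}. Then H_{[γ]α'}(ξ^α) lies in the domain T^{(β)α'} of G_{(β)α'}, so η = (G_{(β)α'} ∘ H_{[γ]α'})(ξ^α) is well defined; moreover η is the tight filter associated with the character θ_t(φ), i.e., for every e ∈ E(S), θ_t(φ)(e) = 1 if and only if e ∈ η. -/

import Mathlib

open Classical

universe u v w

/-! ## Words over an alphabet -/

/-- Finite-or-infinite words over the alphabet `A`: `Sum.inl l` is the finite word `l`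
(with `[]` playing the role of the empty word `ω`), and `Sum.inr f` is the infinite word `f`. -/
abbrev Word (A : Type w) := List A ⊕ (ℕ → A)

/-- The length `|α| ∈ ℕ∞` of a word. -/
def wlength {A : Type w} : Word A → ℕ∞ :=
  Sum.elim (fun l => (l.length : ℕ∞)) fun _ => ⊤

/-- The finite prefix `α_{1,n}` of a word `α`. -/
def wprefix {A : Type w} : Word A → ℕ → List A :=
  Sum.elim (fun l n => l.take n) fun f n => List.ofFn fun i : Fin n => f i

/-- Concatenation `αβ` of a finite word `α` with a word `β`. -/
def wappend {A : Type w} (α : List A) : Word A → Word A :=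
  Sum.elim (fun l => Sum.inl (α ++ l)) fun f =>
    Sum.inr fun n => if h : n < α.length then α.get ⟨n, h⟩ else f (n - α.length)

/-- `β` is a beginning (finite prefix) of the word `α`. -/
def WPrefix {A : Type w} (β : List A) : Word A → Prop :=
  Sum.elim (fun l => β <+: l) fun f => β = List.ofFn fun i : Fin β.length => f i

/-! ## Triples -/

/-- Formal triples `(α, X, β)` together with a zero element; the inverse semigroup `S`
of a labelled space consists of such elements. -/
inductive Tr (V : Type u) (A : Type w) where
  | zero : Tr V A
  | mk : List A → Set V → List A → Tr V A

/-- The involution `(α,A,β)* = (β,A,α)` (fixing `0`). -/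
def Tr.tstar {V : Type u} {A : Type w} : Tr V A → Tr V A
  | .zero => .zero
  | .mk α X β => .mk β X α

/-! ## Labelled spaces -/

/-- The data of a labelled space `(E, ℒ, 𝒜)`: a directed graph on nonempty vertex/edge
sets, a surjective labelling map onto the alphabet `A`, and a family `𝒜` of subsets
of the vertex set. -/
structure LblSp (V : Type u) (E : Type v) (A : Type w) where
  src : E → V
  rng : E → V
  lab : E → A
  lab_surj : Function.Surjective lab
  nonempty_V : Nonempty V
  nonempty_E : Nonempty E
  𝒜 : Set (Set V)

namespace LblSp

variable {V : Type u} {Ed : Type v} {A : Type w} (Λ : LblSp V Ed A)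

/-- `α ≠ ω` is the label of some finite path of the graph. -/
def IsPathLabel (α : List A) : Prop :=
  ∃ l : List Ed, l ≠ [] ∧ List.Chain' (fun e f => Λ.rng e = Λ.src f) l ∧ l.map Λ.lab = α

/-- `ℒ^*`: the finite labelled paths, together with the empty word. -/
def LStar : Set (List A) := {α | α = [] ∨ Λ.IsPathLabel α}

/-- `ℒ^∞`: the infinite labelled paths. -/
def LInfty : Set (ℕ → A) :=
  {f | ∃ e : ℕ → Ed, (∀ n, Λ.rng (e n) = Λ.src (e (n + 1))) ∧ ∀ n, Λ.lab (e n) = f n}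

/-- `ℒ^{≤∞} = ℒ^* ∪ ℒ^∞`, as a predicate on `Word A`. -/
def IsWordW : Word A → Prop := Sum.elim (· ∈ Λ.LStar) (· ∈ Λ.LInfty)

/-- The relative range `r(X, α)` (with `r(X, ω) = X`). -/
noncomputable def relRange (X : Set V) (α : List A) : Set V :=
  if α = [] then X
  else {v | ∃ (l : List Ed) (h : l ≠ []), List.Chain' (fun e f => Λ.rng e = Λ.src f) l ∧
        l.map Λ.lab = α ∧ Λ.src (l.head h) ∈ X ∧ Λ.rng (l.getLast h) = v}

/-- The range `r(α) = r(E⁰, α)`. -/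
noncomputable def rangeL (α : List A) : Set V := Λ.relRange Set.univ α

/-- `𝒜^α = {X ∈ 𝒜 : X ⊆ r(α)}`. -/
noncomputable def Aset (α : List A) : Set (Set V) := {X | X ∈ Λ.𝒜 ∧ X ⊆ Λ.rangeL α}

/-- `(E, ℒ, 𝒜)` is a labelled space: `𝒜` is closed under finite intersections and
unions, contains all ranges `r(α)` for `α ∈ ℒ^{≥1}`, and is closed under relative ranges. -/
structure IsLS : Prop where
  inter_mem : ∀ X ∈ Λ.𝒜, ∀ Y ∈ Λ.𝒜, X ∩ Y ∈ Λ.𝒜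
  union_mem : ∀ X ∈ Λ.𝒜, ∀ Y ∈ Λ.𝒜, X ∪ Y ∈ Λ.𝒜
  range_mem : ∀ α ∈ Λ.LStar, α ≠ [] → Λ.rangeL α ∈ Λ.𝒜
  relRange_mem : ∀ X ∈ Λ.𝒜, ∀ α ∈ Λ.LStar, Λ.relRange X α ∈ Λ.𝒜

/-- A weakly left-resolving labelled space. -/
structure IsWLR : Prop where
  toIsLS : Λ.IsLS
  wlr : ∀ X ∈ Λ.𝒜, ∀ Y ∈ Λ.𝒜, ∀ α ∈ Λ.LStar, α ≠ [] →
    Λ.relRange (X ∩ Y) α = Λ.relRange X α ∩ Λ.relRange Y α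

/-- A weakly left-resolving normal labelled space. -/
structure IsNormal : Prop where
  toIsWLR : Λ.IsWLR
  sdiff_mem : ∀ X ∈ Λ.𝒜, ∀ Y ∈ Λ.𝒜, X \ Y ∈ Λ.𝒜

/-! ## The inverse semigroup `S` -/

/-- The underlying set of the inverse semigroup
`S = {(α,A,β) : α, β ∈ ℒ^*, A ∈ 𝒜^α ∩ 𝒜^β, A ≠ ∅} ∪ {0}`. -/
def SSet : Set (Tr V A) :=
  {t | t = Tr.zero ∨ ∃ α X β, t = Tr.mk α X β ∧ α ∈ Λ.LStar ∧ β ∈ Λ.LStar ∧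
    X ∈ Λ.Aset α ∧ X ∈ Λ.Aset β ∧ X.Nonempty}

/-- The semilattice of idempotents `E(S) = {(α,A,α)} ∪ {0}`. -/
def ESet : Set (Tr V A) :=
  {t | t = Tr.zero ∨ ∃ α X, t = Tr.mk α X α ∧ α ∈ Λ.LStar ∧ X ∈ Λ.Aset α ∧ X.Nonempty}

/-- The product of `S`. -/
noncomputable def tmul : Tr V A → Tr V A → Tr V A
  | Tr.zero, _ => Tr.zero
  | Tr.mk _ _ _, Tr.zero => Tr.zero
  | Tr.mk α X β, Tr.mk γ Y δ =>
    if β <+: γ ∧ (Λ.relRange X (γ.drop β.length) ∩ Y).Nonempty then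
      Tr.mk (α ++ γ.drop β.length) (Λ.relRange X (γ.drop β.length) ∩ Y) δ
    else if γ <+: β ∧ (X ∩ Λ.relRange Y (β.drop γ.length)).Nonempty then
      Tr.mk α (X ∩ Λ.relRange Y (β.drop γ.length)) (δ ++ β.drop γ.length)
    else Tr.zero

/-! ## Filters in `E(S)`, characters, and the tight spectrum -/

/-- A filter in `E(S)`: a nonempty subset of `E(S) ∖ {0}` closed under products and
upward closed in the natural order (`p ≤ q ↔ pq = p`). -/
def IsFilterES (ξ : Set (Tr V A)) : Prop :=
  ξ.Nonempty ∧ (∀ t ∈ ξ, t ∈ Λ.ESet ∧ t ≠ Tr.zero) ∧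
  (∀ p ∈ ξ, ∀ q ∈ ξ, Λ.tmul p q ∈ ξ) ∧
  (∀ p ∈ ξ, ∀ q ∈ Λ.ESet, Λ.tmul p q = p → q ∈ ξ)

/-- An ultrafilter in `E(S)`. -/
def IsUltraES (ξ : Set (Tr V A)) : Prop :=
  Λ.IsFilterES ξ ∧ ∀ ζ, Λ.IsFilterES ζ → ξ ⊆ ζ → ξ = ζ

/-- The character (indicator function) of a filter. -/
noncomputable def charOf (_Λ : LblSp V Ed A) (ξ : Set (Tr V A)) : Tr V A → Bool :=
  fun t => if t ∈ ξ then true else false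

/-- A character of `E(S)`: a nonzero, zero- and meet-preserving `{0,1}`-valued map on
`E(S)` (encoded as a map on triples vanishing outside `E(S)`). -/
def IsChar (φ : Tr V A → Bool) : Prop :=
  (∃ e, φ e = true) ∧ (∀ e, e ∉ Λ.ESet → φ e = false) ∧ φ Tr.zero = false ∧
  ∀ e ∈ Λ.ESet, ∀ f ∈ Λ.ESet, φ (Λ.tmul e f) = (φ e && φ f)

/-- The tight spectrum `Ê_tight`: the closure, within the space of characters with the
topology of pointwise convergence, of the set of characters of ultrafilters. -/
def tightSpectrum : Set (Tr V A → Bool) :=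
  {φ | Λ.IsChar φ} ∩ closure {φ | ∃ ξ, Λ.IsUltraES ξ ∧ φ = Λ.charOf ξ}

/-- A tight filter: a filter whose character lies in the tight spectrum. -/
def IsTightFilter (ξ : Set (Tr V A)) : Prop :=
  Λ.IsFilterES ξ ∧ Λ.charOf ξ ∈ Λ.tightSpectrum

/-- `ξ_{|β|} = {B : (β, B, β) ∈ ξ}`, the filter of `ξ` at level `β`. -/
def filterAt (_Λ : LblSp V Ed A) (ξ : Set (Tr V A)) (β : List A) : Set (Set V) :=
  {B | Tr.mk β B β ∈ ξ}

/-- `α` is the word associated with the filter `ξ` (i.e. `ξ = ξ^α`): the nonempty finite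
beginnings of `α` are exactly the words appearing in elements of `ξ`. -/
def HasWord (_Λ : LblSp V Ed A) (ξ : Set (Tr V A)) (α : Word A) : Prop :=
  ∀ β : List A, β ≠ [] → ((∃ B, Tr.mk β B β ∈ ξ) ↔ WPrefix β α)

/-! ## Filters and ultrafilters in `𝒜^β` -/

/-- A filter in the Boolean algebra `𝒜^β`. -/
def IsFilterAset (β : List A) (F : Set (Set V)) : Prop :=
  F.Nonempty ∧ F ⊆ Λ.Aset β ∧ (∀ X ∈ F, X.Nonempty) ∧
  (∀ X ∈ F, ∀ Y ∈ F, X ∩ Y ∈ F) ∧ (∀ X ∈ F, ∀ Y ∈ Λ.Aset β, X ⊆ Y → Y ∈ F)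

/-- An ultrafilter in `𝒜^β` (an element of `X_β`). -/
def IsUltraAset (β : List A) (F : Set (Set V)) : Prop :=
  Λ.IsFilterAset β F ∧ ∀ G, Λ.IsFilterAset β G → F ⊆ G → F = G

/-- The gluing map `g_{(α)β}(F) = {C ∩ r(αβ) : C ∈ F}` on ultrafilters. -/
noncomputable def gmap (α β : List A) (F : Set (Set V)) : Set (Set V) :=
  {X | ∃ C ∈ F, X = C ∩ Λ.rangeL (α ++ β)}

/-- The cutting map `h_{[α]β}(F) = {C ∈ 𝒜^β : D ⊆ C for some D ∈ F}` on ultrafilters. -/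
noncomputable def hmap (α β : List A) (F : Set (Set V)) : Set (Set V) :=
  {C | C ∈ Λ.Aset β ∧ ∃ D ∈ F, D ⊆ C}

/-! ## Cutting and gluing of (tight) filters in `E(S)` -/

/-- The cutting map `H_{[α]β} : T^{αβ} → T^{(α)β}` (word-free formulation): the filter
whose family is `η_n = h_{[α]β_{1,n}}(ξ_{n+|α|})`; `H_{[ω]β}` is the identity. -/
noncomputable def Hcut (α : List A) (ξ : Set (Tr V A)) : Set (Tr V A) :=
  if α = [] then ξ
  else {t | ∃ δ B, t = Tr.mk δ B δ ∧ B ∈ Λ.Aset δ ∧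
        ∃ D, Tr.mk (α ++ δ) D (α ++ δ) ∈ ξ ∧ D ⊆ B}

/-- The gluing map `G_{(α)β} : T^{(α)β} → T^{αβ}` (word-free formulation): the filter with
family `η_{|α|+n} = g_{(α)β_{1,n}}(ξ_n)` for `n ≥ 1` and `η_i = f_{α_{1,i}[…]}(…)` for
`i ≤ |α|`, with the two cases according to whether the word of `ξ` is empty (`β = ω`)
or not; `G_{(ω)β}` is the identity. -/
noncomputable def Gglue (α : List A) (ξ : Set (Tr V A)) : Set (Tr V A) :=
  if α = [] then ξ
  else if ∃ (δ : List A) (B : Set V), δ ≠ [] ∧ Tr.mk δ B δ ∈ ξ then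
    {t | ∃ δ B, t = Tr.mk δ B δ ∧
      ((α <+: δ ∧ α ≠ δ ∧ ∃ C, Tr.mk (δ.drop α.length) C (δ.drop α.length) ∈ ξ ∧
          B = C ∩ Λ.rangeL δ) ∨
       (δ <+: α ∧ B ∈ Λ.Aset δ ∧ ∃ (b : A) (C : Set V), Tr.mk [b] C [b] ∈ ξ ∧
          Λ.relRange B (α.drop δ.length ++ [b]) = C ∩ Λ.rangeL (α ++ [b])))}
  else
    {t | ∃ δ B, t = Tr.mk δ B δ ∧ δ <+: α ∧ B ∈ Λ.Aset δ ∧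
      ∃ C, Tr.mk [] C [] ∈ ξ ∧ Λ.relRange B (α.drop δ.length) = C ∩ Λ.rangeL α}

/-- `T^β`: the set of tight filters with associated word `β`. -/
def TWord (β : Word A) : Set (Set (Tr V A)) :=
  {ξ | Λ.IsTightFilter ξ ∧ Λ.HasWord ξ β}

/-- `T^{(α)β} = {ξ ∈ T^β : r(α) ∈ ξ_0}` (equal to `T^β` when `α = ω`), the domain of the
gluing map `G_{(α)β}`. -/
def TGlueDom (α : List A) (β : Word A) : Set (Set (Tr V A)) :=
  {ξ | Λ.IsTightFilter ξ ∧ Λ.HasWord ξ β ∧ (α ≠ [] → Tr.mk [] (Λ.rangeL α) [] ∈ ξ)}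

/-! ## The groupoid `Γ` -/

/-- The defining relation of
`Γ = {(ξ^{aγ}, |a|-|b|, η^{bγ}) ∈ T × ℤ × T : H_{[a]γ}(ξ^{aγ}) = H_{[b]γ}(η^{bγ})}`. -/
def InGamma (η : Set (Tr V A)) (m : ℤ) (ξ : Set (Tr V A)) : Prop :=
  ∃ (a b : List A) (γ : Word A), a ∈ Λ.LStar ∧ b ∈ Λ.LStar ∧ Λ.IsWordW γ ∧
    η ∈ Λ.TWord (wappend a γ) ∧ ξ ∈ Λ.TWord (wappend b γ) ∧
    m = (a.length : ℤ) - (b.length : ℤ) ∧ Λ.Hcut a η = Λ.Hcut b ξ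

/-- `Γ` as a set of raw triples. -/
def GammaRaw : Set (Set (Tr V A) × ℤ × Set (Tr V A)) :=
  {p | Λ.InGamma p.1 p.2.1 p.2.2}

/-- The basic set `Z_{s,e:e₁,…,eₙ}` of `Γ` (raw version), for `s = (μ, X, ν)`:
triples `(η^{μγ}, |μ|-|ν|, ξ^{νγ}) ∈ Γ` with `e ∈ ξ`, `eᵢ ∉ ξ` and
`H_{[μ]γ}(η) = H_{[ν]γ}(ξ)`. -/
noncomputable def ZrawGen (μ ν : List A) (e : Tr V A) (es : List (Tr V A)) :
    Set (Set (Tr V A) × ℤ × Set (Tr V A)) :=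
  {p | Λ.InGamma p.1 p.2.1 p.2.2 ∧ p.2.1 = (μ.length : ℤ) - (ν.length : ℤ) ∧
       e ∈ p.2.2 ∧ (∀ f ∈ es, f ∉ p.2.2) ∧
       ∃ γ : Word A, Λ.HasWord p.1 (wappend μ γ) ∧ Λ.HasWord p.2.2 (wappend ν γ) ∧
         Λ.Hcut μ p.1 = Λ.Hcut ν p.2.2}

/-- `Z_s = Z_{s, s*s}` for `s = (μ, X, ν)` (raw version). -/
noncomputable def Zraw (μ : List A) (X : Set V) (ν : List A) :
    Set (Set (Tr V A) × ℤ × Set (Tr V A)) :=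
  Λ.ZrawGen μ ν (Tr.mk ν X ν) []

/-- The basic set `V_{e:e₁,…,eₙ} = U_{e:e₁,…,eₙ} ∩ T` of the tight filter space
(raw version). -/
def VrawGen (e : Tr V A) (es : List (Tr V A)) : Set (Set (Tr V A)) :=
  {ξ | Λ.IsTightFilter ξ ∧ e ∈ ξ ∧ ∀ f ∈ es, f ∉ ξ}

/-- The shift map `σ : T^{(1)} → T`, `σ(ξ^{aγ}) = H_{[a]γ}(ξ^{aγ})` (extended by the
identity off its domain). -/
noncomputable def sigmaMap (ξ : Set (Tr V A)) : Set (Tr V A) :=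
  if h : ∃ a : A, ∃ B : Set V, Tr.mk [a] B [a] ∈ ξ then Λ.Hcut [h.choose] ξ else ξ

/-- The Renault–Deaconu basic set
`𝒱(X, Y, m, n) = {(η, m-n, ξ) ∈ Γ : (η, ξ) ∈ X × Y, σ^m(η) = σ^n(ξ)}` (raw version). -/
noncomputable def VrdRaw (Xs Ys : Set (Set (Tr V A))) (m n : ℕ) :
    Set (Set (Tr V A) × ℤ × Set (Tr V A)) :=
  {p | Λ.InGamma p.1 p.2.1 p.2.2 ∧ p.2.1 = (m : ℤ) - (n : ℤ) ∧
       p.1 ∈ Xs ∧ p.2.2 ∈ Ys ∧ (Λ.sigmaMap)^[m] p.1 = (Λ.sigmaMap)^[n] p.2.2}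

/-! ## The groupoid of germs `𝒢_tight` -/

/-- The action `θ_s(φ)(e) = φ(s* e s)` of `S` on characters. -/
noncomputable def theta (s : Tr V A) (φ : Tr V A → Bool) : Tr V A → Bool :=
  fun e => if e ∈ Λ.ESet then φ (Λ.tmul (Λ.tmul (Tr.tstar s) e) s) else false

/-- `Ω = {(s, φ) ∈ S × Ê_tight : φ ∈ D_{s*s}}`. -/
noncomputable def Omega : Set (Tr V A × (Tr V A → Bool)) :=
  {p | p.1 ∈ Λ.SSet ∧ p.2 ∈ Λ.tightSpectrum ∧ p.2 (Λ.tmul (Tr.tstar p.1) p.1) = true}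

/-- The germ equivalence relation on `Ω`: `(s,φ) ∼ (t,ψ)` iff `φ = ψ` and there is
`e ∈ E(S)` with `φ(e) = 1` and `se = te`. -/
noncomputable def germEquiv (p q : Tr V A × (Tr V A → Bool)) : Prop :=
  p.2 = q.2 ∧ ∃ e ∈ Λ.ESet, p.2 e = true ∧ Λ.tmul p.1 e = Λ.tmul q.1 e

/-- The map `Φ` at the level of `Ω`: for `t = (β, X, γ)` and `φ` with filter `ξ^α`
(where `α = γα'`), `Φ[t,φ] = ((G_{(β)α'} ∘ H_{[γ]α'})(ξ^α), |β|-|γ|, ξ^α)`. -/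
noncomputable def PhiRaw : Tr V A → (Tr V A → Bool) → Set (Tr V A) × ℤ × Set (Tr V A)
  | Tr.zero, _ => (∅, 0, ∅)
  | Tr.mk β _ γ, φ =>
      (Λ.Gglue β (Λ.Hcut γ {e | φ e = true}), (β.length : ℤ) - (γ.length : ℤ),
        {e | φ e = true})

/-! ## Miscellaneous notions -/

/-- `ℒ(XE¹) = {ℒ(e) : e ∈ E¹, s(e) ∈ X}`. -/
def labE (X : Set V) : Set A := {a | ∃ e, Λ.lab e = a ∧ Λ.src e ∈ X}

/-- The set `E⁰_sink` of sinks. -/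
def sinks : Set V := {v | ∀ e, Λ.src e ≠ v}

/-- The filter in `E(S)` associated with a pair (word, complete family). -/
def pairFilter (_Λ : LblSp V Ed A) (α : Word A) (F : ℕ → Set (Set V)) : Set (Tr V A) :=
  {t | ∃ (n : ℕ) (B : Set V), (n : ℕ∞) ≤ wlength α ∧ B ∈ F n ∧
    t = Tr.mk (wprefix α n) B (wprefix α n)}

/-- A complete family for the word `α`: `F n` is a filter in `𝒜^{α_{1,n}}` for
`1 ≤ n ≤ |α|` (`F 0` is a filter in `𝒜` or empty, and a filter if `α = ω`), and
`F n = {X ∈ 𝒜^{α_{1,n}} : r(X, α_{n+1}) ∈ F (n+1)}` for all `n < |α|`. -/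
noncomputable def IsCompleteFamily (α : Word A) (F : ℕ → Set (Set V)) : Prop :=
  Λ.IsWordW α ∧
  (∀ n : ℕ, 1 ≤ n → (n : ℕ∞) ≤ wlength α → Λ.IsFilterAset (wprefix α n) (F n)) ∧
  (F 0 = ∅ ∨ Λ.IsFilterAset [] (F 0)) ∧
  (wlength α = 0 → Λ.IsFilterAset [] (F 0)) ∧
  (∀ n : ℕ, ((n + 1 : ℕ) : ℕ∞) ≤ wlength α →
    F n = {X | X ∈ Λ.Aset (wprefix α n) ∧
      Λ.relRange X ((wprefix α (n + 1)).drop n) ∈ F (n + 1)})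

/-! ## The tight filter space `T` and the groupoid `Γ` as types -/

/-- The space `T` of tight filters. -/
structure TightT where
  carrier : Set (Tr V A)
  tight : Λ.IsTightFilter carrier

/-- The topology of `T`, induced from pointwise convergence of characters. -/
noncomputable instance : TopologicalSpace Λ.TightT :=
  TopologicalSpace.induced (fun ξ => Λ.charOf ξ.carrier) inferInstance

/-- The groupoid `Γ ⊆ T × ℤ × T` as a type. -/
structure GammaT where
  fst : Λ.TightT
  mid : ℤ
  lst : Λ.TightT
  mem : Λ.InGamma fst.carrier mid lst.carrier

/-- The raw triple underlying an element of `Γ`. -/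
def rawOf (p : Λ.GammaT) : Set (Tr V A) × ℤ × Set (Tr V A) :=
  (p.fst.carrier, p.mid, p.lst.carrier)

/-- The collection of all sets `Z_{s,e:e₁,…,eₙ}` (for `s ∈ S`, `e, eᵢ ∈ E(S)`),
as subsets of `Γ`. -/
noncomputable def ZBasisT : Set (Set Λ.GammaT) :=
  {Z | ∃ (μ : List A) (X : Set V) (ν : List A) (e : Tr V A) (es : List (Tr V A)),
    Tr.mk μ X ν ∈ Λ.SSet ∧ e ∈ Λ.ESet ∧ (∀ f ∈ es, f ∈ Λ.ESet) ∧
    Z = {p : Λ.GammaT | Λ.rawOf p ∈ Λ.ZrawGen μ ν e es}}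

/-- The topology on `Γ` induced by the isomorphism `Φ` from the germ topology of
`𝒢_tight`, generated by the images of the basic sets `Θ(s, 𝒰)` with `𝒰 ⊆ D_{s*s}`
open in the tight spectrum. -/
noncomputable def PhiTopology : TopologicalSpace Λ.GammaT :=
  TopologicalSpace.generateFrom
    {Z | ∃ (s : Tr V A) (U : Set (Tr V A → Bool)), s ∈ Λ.SSet ∧
      (∃ W, IsOpen W ∧ U = W ∩ Λ.tightSpectrum) ∧
      (∀ φ ∈ U, φ (Λ.tmul (Tr.tstar s) s) = true) ∧
      Z = {p : Λ.GammaT | ∃ φ ∈ U, (s, φ) ∈ Λ.Omega ∧ Λ.PhiRaw s φ = Λ.rawOf p}}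

end LblSp

namespace LblSp

variable {V : Type u} {Ed : Type v} {A : Type w} (Λ : LblSp V Ed A)


/-! ### Auxiliary development for Statement 9 -/

variable {Λ}

theorem relRange_nil (X : Set V) : Λ.relRange X [] = X := if_pos rfl

theorem mem_relRange {α : List A} (hα : α ≠ []) {X : Set V} {v : V} :
    v ∈ Λ.relRange X α ↔ ∃ (l : List Ed) (h : l ≠ []),
      List.Chain' (fun e f => Λ.rng e = Λ.src f) l ∧
      l.map Λ.lab = α ∧ Λ.src (l.head h) ∈ X ∧ Λ.rng (l.getLast h) = v := by
  rw [LblSp.relRange, if_neg hα]; rfl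

theorem relRange_mono {X Y : Set V} (h : X ⊆ Y) (α : List A) :
    Λ.relRange X α ⊆ Λ.relRange Y α := by
  rcases eq_or_ne α [] with rfl | hα
  · rw [relRange_nil, relRange_nil]; exact h
  · intro v hv
    rw [mem_relRange hα] at hv ⊢
    obtain ⟨l, hl, h1, h2, h3, h4⟩ := hv
    exact ⟨l, hl, h1, h2, h h3, h4⟩

theorem relRange_empty (α : List A) : Λ.relRange (∅ : Set V) α = ∅ := by
  rcases eq_or_ne α [] with rfl | hα
  · exact relRange_nil _
  · ext v
    rw [mem_relRange hα]
    simp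

theorem nonempty_of_relRange {X : Set V} {α : List A}
    (h : (Λ.relRange X α).Nonempty) : X.Nonempty := by
  by_contra hX
  rw [Set.not_nonempty_iff_eq_empty] at hX
  subst hX
  rw [relRange_empty] at h
  exact h.ne_empty rfl

theorem rangeL_nil : Λ.rangeL ([] : List A) = Set.univ := relRange_nil _

theorem relRange_subset_rangeL (X : Set V) (α : List A) :
    Λ.relRange X α ⊆ Λ.rangeL α := by
  rcases eq_or_ne α [] with rfl | hα
  · rw [rangeL_nil]; exact Set.subset_univ _
  · exact relRange_mono (Set.subset_univ X) α

theorem relRange_comp (X : Set V) (α β : List A) :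
    Λ.relRange (Λ.relRange X α) β = Λ.relRange X (α ++ β) := by
  rcases eq_or_ne α [] with rfl | hα
  · rw [relRange_nil, List.nil_append]
  rcases eq_or_ne β [] with rfl | hβ
  · rw [relRange_nil, List.append_nil]
  have hαβ : α ++ β ≠ [] := by simp [hα]
  ext v
  rw [mem_relRange hβ, mem_relRange hαβ]
  constructor
  · rintro ⟨l₂, hl₂, hc₂, hm₂, hs₂, hr₂⟩
    rw [mem_relRange hα] at hs₂
    obtain ⟨l₁, hl₁, hc₁, hm₁, hs₁, hr₁⟩ := hs₂
    have hne : l₁ ++ l₂ ≠ [] := by simp [hl₁]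
    refine ⟨l₁ ++ l₂, hne, ?_, ?_, ?_, ?_⟩
    · rw [List.Chain', List.isChain_append]
      refine ⟨hc₁, hc₂, ?_⟩
      intro x hx y hy
      rw [List.getLast?_eq_getLast hl₁] at hx
      rw [List.head?_eq_head hl₂] at hy
      rw [Option.mem_some_iff] at hx hy
      rw [← hx, ← hy, hr₁]
    · rw [List.map_append, hm₁, hm₂]
    · rwa [List.head_append, dif_neg (by simpa using hl₁)]
    · rwa [List.getLast_append, dif_neg (by simpa using hl₂)]
  · rintro ⟨l, hl, hc, hm, hs, hr⟩
    have hlen : l.length = α.length + β.length := by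
      rw [← List.length_map (as := l) Λ.lab, hm, List.length_append]
    have hsplit : l = l.take α.length ++ l.drop α.length := (List.take_append_drop _ _).symm
    have htm : (l.take α.length).map Λ.lab = α := by
      rw [List.map_take, hm, List.take_left]
    have hdm : (l.drop α.length).map Λ.lab = β := by
      rw [List.map_drop, hm, List.drop_left]
    have ht_ne : l.take α.length ≠ [] := by
      intro h
      rw [← htm, h] at hα; exact hα rfl
    have hd_ne : l.drop α.length ≠ [] := by
      intro h
      rw [← hdm, h] at hβ; exact hβ rfl
    have hc' := hc
    rw [hsplit, List.Chain', List.isChain_append] at hc'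
    obtain ⟨hc₁, hc₂, hlink⟩ := hc'
    refine ⟨l.drop α.length, hd_ne, hc₂, hdm, ?_, ?_⟩
    · rw [mem_relRange hα]
      refine ⟨l.take α.length, ht_ne, hc₁, htm, ?_, ?_⟩
      · rwa [List.head_take ht_ne]
      · exact hlink _ (by rw [List.getLast?_eq_getLast ht_ne]; rfl) _
          (by rw [List.head?_eq_head hd_ne]; rfl)
    · rwa [List.getLast_drop hd_ne]

theorem rangeL_append (α β : List A) :
    Λ.rangeL (α ++ β) = Λ.relRange (Λ.rangeL α) β :=
  (relRange_comp _ _ _).symm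

theorem rangeL_append_subset (α β : List A) : Λ.rangeL (α ++ β) ⊆ Λ.rangeL β := by
  rw [rangeL_append]
  exact relRange_subset_rangeL _ _

theorem nil_mem_LStar : ([] : List A) ∈ Λ.LStar := Or.inl rfl

theorem LStar_of_relRange_nonempty {X : Set V} {α : List A}
    (h : (Λ.relRange X α).Nonempty) : α ∈ Λ.LStar := by
  rcases eq_or_ne α [] with rfl | hα
  · exact nil_mem_LStar
  · obtain ⟨v, hv⟩ := h
    rw [mem_relRange hα] at hv
    obtain ⟨l, hl, hc, hm, -, -⟩ := hv
    exact Or.inr ⟨l, hl, hc, hm⟩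

theorem LStar_of_rangeL_nonempty {α : List A}
    (h : (Λ.rangeL α).Nonempty) : α ∈ Λ.LStar :=
  LStar_of_relRange_nonempty h

theorem IsPathLabel.ne_nil {α : List A} (h : Λ.IsPathLabel α) : α ≠ [] := by
  obtain ⟨l, hl, -, hm⟩ := h
  rw [← hm]
  simpa using hl

theorem LStar_take {α : List A} (h : α ∈ Λ.LStar) (n : ℕ) : α.take n ∈ Λ.LStar := by
  rcases h with rfl | ⟨l, hl, hc, hm⟩
  · simpa using nil_mem_LStar
  rcases eq_or_ne (α.take n) [] with h0 | h0
  · rw [h0]; exact nil_mem_LStar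
  refine Or.inr ⟨l.take n, ?_, hc.prefix (List.take_prefix _ _), ?_⟩
  · intro hln
    have : α.take n = List.map Λ.lab (l.take n) := by rw [List.map_take, hm]
    rw [this, hln] at h0; exact h0 rfl
  · rw [List.map_take, hm]

theorem LStar_drop {α : List A} (h : α ∈ Λ.LStar) (n : ℕ) : α.drop n ∈ Λ.LStar := by
  rcases h with rfl | ⟨l, hl, hc, hm⟩
  · simpa using nil_mem_LStar
  rcases eq_or_ne (α.drop n) [] with h0 | h0
  · rw [h0]; exact nil_mem_LStar
  refine Or.inr ⟨l.drop n, ?_, hc.suffix (List.drop_suffix _ _), ?_⟩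
  · intro hln
    have : α.drop n = List.map Λ.lab (l.drop n) := by rw [List.map_drop, hm]
    rw [this, hln] at h0; exact h0 rfl
  · rw [List.map_drop, hm]

theorem LStar_prefix {α β : List A} (h : β <+: α) (hα : α ∈ Λ.LStar) : β ∈ Λ.LStar := by
  rw [List.prefix_iff_eq_take.mp h]
  exact LStar_take hα _

theorem LStar_append_right {α β : List A} (h : α ++ β ∈ Λ.LStar) : β ∈ Λ.LStar := by
  have := LStar_drop h α.length
  rwa [List.drop_left] at this

theorem prefix_append_drop {α β : List A} (h : α <+: β) : α ++ β.drop α.length = β :=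
  List.prefix_iff_eq_append.mp h

theorem drop_append_cancel (γ : List A) {δ ε : List A} (h : δ <+: ε) :
    (γ ++ ε).drop (γ ++ δ).length = ε.drop δ.length := by
  rw [List.length_append, ← List.drop_drop, List.drop_left]

theorem drop_trans {δ ε μ : List A} (h1 : δ <+: ε) (h2 : ε <+: μ) :
    ε.drop δ.length ++ μ.drop ε.length = μ.drop δ.length := by
  obtain ⟨s, rfl⟩ := h1
  obtain ⟨t, rfl⟩ := h2
  rw [List.drop_left, List.append_assoc, List.drop_left, ← List.append_assoc, List.drop_left]

/-! ### `𝒜` and `E(S)` basics -/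

theorem inter_rangeL_mem (hLS : Λ.IsLS) {B : Set V} (hB : B ∈ Λ.𝒜) {μ : List A}
    (hμ : μ ∈ Λ.LStar) : B ∩ Λ.rangeL μ ∈ Λ.𝒜 := by
  rcases eq_or_ne μ [] with rfl | hne
  · rwa [rangeL_nil, Set.inter_univ]
  · exact hLS.inter_mem B hB _ (hLS.range_mem μ hμ hne)

theorem relRange_mem' (hLS : Λ.IsLS) {B : Set V} (hB : B ∈ Λ.𝒜) {μ : List A}
    (hμ : μ ∈ Λ.LStar) : Λ.relRange B μ ∈ Λ.𝒜 :=
  hLS.relRange_mem B hB μ hμ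

theorem relRange_inter_rangeL (hW : Λ.IsWLR) {C : Set V} (hC : C ∈ Λ.𝒜) {μ ν : List A}
    (hμ : μ ∈ Λ.LStar) (hν : ν ∈ Λ.LStar) :
    Λ.relRange (C ∩ Λ.rangeL μ) ν = Λ.relRange C ν ∩ Λ.rangeL (μ ++ ν) := by
  rcases eq_or_ne μ [] with rfl | hμne
  · rw [rangeL_nil, Set.inter_univ, List.nil_append]
    exact (Set.inter_eq_left.mpr (relRange_subset_rangeL _ _)).symm
  rcases eq_or_ne ν [] with rfl | hνne
  · rw [relRange_nil, relRange_nil, List.append_nil]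
  · rw [hW.wlr C hC _ (hW.toIsLS.range_mem μ hμ hμne) ν hν hνne, rangeL_append]

theorem zero_mem_ESet : (Tr.zero : Tr V A) ∈ Λ.ESet := Or.inl rfl

theorem mem_ESet_mk {δ δ' : List A} {B : Set V} :
    Tr.mk δ B δ' ∈ Λ.ESet ↔ δ' = δ ∧ δ ∈ Λ.LStar ∧ B ∈ Λ.Aset δ ∧ B.Nonempty := by
  constructor
  · rintro (h | ⟨a, Xx, heq, h1, h2, h3⟩)
    · exact absurd h (by simp [LblSp.ESet])
    · rw [Tr.mk.injEq] at heq
      obtain ⟨rfl, rfl, rfl⟩ := heq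
      exact ⟨rfl, h1, h2, h3⟩
  · rintro ⟨h0, h1, h2, h3⟩
    subst h0
    exact Or.inr ⟨_, B, rfl, h1, h2, h3⟩

theorem mk_mem_ESet {δ : List A} {B : Set V} (h1 : δ ∈ Λ.LStar) (h2 : B ∈ Λ.Aset δ)
    (h3 : B.Nonempty) : Tr.mk δ B δ ∈ Λ.ESet :=
  Or.inr ⟨δ, B, rfl, h1, h2, h3⟩

/-! ### `tmul` computations -/

theorem tmul_mk (a b a' b' : List A) (B C : Set V) :
    Λ.tmul (Tr.mk a B a') (Tr.mk b C b') =
      if a' <+: b ∧ (Λ.relRange B (b.drop a'.length) ∩ C).Nonempty then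
        Tr.mk (a ++ b.drop a'.length) (Λ.relRange B (b.drop a'.length) ∩ C) b'
      else if b <+: a' ∧ (B ∩ Λ.relRange C (a'.drop b.length)).Nonempty then
        Tr.mk a (B ∩ Λ.relRange C (a'.drop b.length)) (b' ++ a'.drop b.length)
      else Tr.zero := rfl

theorem tmul_zero (t : Tr V A) : Λ.tmul t Tr.zero = Tr.zero := by
  cases t <;> rfl

theorem zero_tmul (t : Tr V A) : Λ.tmul Tr.zero t = Tr.zero := rfl

theorem tmul_of_prefix_left {a b : List A} {B C : Set V} (h : a <+: b)
    (hne : (Λ.relRange B (b.drop a.length) ∩ C).Nonempty) :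
    Λ.tmul (Tr.mk a B a) (Tr.mk b C b) =
      Tr.mk b (Λ.relRange B (b.drop a.length) ∩ C) b := by
  rw [tmul_mk, if_pos ⟨h, hne⟩, prefix_append_drop h]

theorem tmul_of_prefix_right {a b : List A} {B C : Set V} (h : b <+: a)
    (hne : (B ∩ Λ.relRange C (a.drop b.length)).Nonempty) :
    Λ.tmul (Tr.mk a B a) (Tr.mk b C b) =
      Tr.mk a (B ∩ Λ.relRange C (a.drop b.length)) a := by
  rw [tmul_mk]
  by_cases h1 : a <+: b ∧ (Λ.relRange B (b.drop a.length) ∩ C).Nonempty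
  · have hab : a = b := h1.1.eq_of_length (le_antisymm h1.1.length_le h.length_le)
    subst hab
    rw [if_pos h1]
    simp [List.drop_length, relRange_nil]
  · rw [if_neg h1, if_pos ⟨h, hne⟩, prefix_append_drop h]

theorem tmul_shape {a b : List A} {B C : Set V} :
    Λ.tmul (Tr.mk a B a) (Tr.mk b C b) = Tr.zero ∨
      ∃ m, (m = a ∨ m = b) ∧ a <+: m ∧ b <+: m ∧
        (Λ.relRange B (m.drop a.length) ∩ Λ.relRange C (m.drop b.length)).Nonempty ∧
        Λ.tmul (Tr.mk a B a) (Tr.mk b C b) =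
          Tr.mk m (Λ.relRange B (m.drop a.length) ∩ Λ.relRange C (m.drop b.length)) m := by
  rw [tmul_mk]
  split_ifs with h1 h2
  · right
    refine ⟨b, Or.inr rfl, h1.1, List.prefix_refl b, ?_, ?_⟩
    · simpa only [List.drop_length, relRange_nil] using h1.2
    · rw [prefix_append_drop h1.1]
      simp only [List.drop_length, relRange_nil]
  · right
    refine ⟨a, Or.inl rfl, List.prefix_refl a, h2.1, ?_, ?_⟩
    · simpa only [List.drop_length, relRange_nil] using h2.2
    · rw [prefix_append_drop h2.1]
      simp only [List.drop_length, relRange_nil]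
  · exact Or.inl rfl

theorem tmul_comm_ne_zero {a b : List A} {B C : Set V}
    (h : Λ.tmul (Tr.mk a B a) (Tr.mk b C b) ≠ Tr.zero) :
    Λ.tmul (Tr.mk b C b) (Tr.mk a B a) ≠ Tr.zero := by
  rcases tmul_shape (Λ := Λ) (a := a) (b := b) (B := B) (C := C) with h0 | ⟨m, hm, hap, hbp, hne, heq⟩
  · exact absurd h0 h
  rcases hm with rfl | rfl
  · rw [tmul_of_prefix_left hbp (by
      simp only [List.drop_length, relRange_nil] at hne
      exact Set.inter_comm B _ ▸ (by rwa [Set.inter_comm] at hne : (Λ.relRange C (m.drop b.length) ∩ B).Nonempty))]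
    simp
  · rw [tmul_of_prefix_right hap (by rwa [List.drop_length, relRange_nil, Set.inter_comm] at hne)]
    simp

theorem le_iff {a b : List A} {B C : Set V} (hB : B.Nonempty) :
    Λ.tmul (Tr.mk a B a) (Tr.mk b C b) = Tr.mk a B a ↔
      b <+: a ∧ B ⊆ Λ.relRange C (a.drop b.length) := by
  rw [tmul_mk]
  split_ifs with h1 h2
  · constructor
    · intro heq
      rw [Tr.mk.injEq] at heq
      obtain ⟨h3, h4, h5⟩ := heq
      subst h5
      refine ⟨List.prefix_refl _, ?_⟩
      simp only [List.drop_length, relRange_nil] at h4 ⊢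
      exact Set.inter_eq_left.mp h4
    · rintro ⟨hba, hsub⟩
      have hab : a = b := h1.1.eq_of_length (le_antisymm h1.1.length_le hba.length_le)
      subst hab
      simp only [List.drop_length, relRange_nil] at hsub ⊢
      rw [Set.inter_eq_left.mpr hsub]
      simp
  · constructor
    · intro heq
      rw [Tr.mk.injEq] at heq
      exact ⟨h2.1, Set.inter_eq_left.mp heq.2.1⟩
    · rintro ⟨hba, hsub⟩
      rw [Set.inter_eq_left.mpr hsub, prefix_append_drop hba]
  · constructor
    · intro heq; exact absurd heq (by simp)
    · rintro ⟨hba, hsub⟩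
      exact absurd ⟨hba, by rwa [Set.inter_eq_left.mpr hsub]⟩ h2

theorem le_trans' {w a b : List A} {S B C : Set V} (hS : S.Nonempty) (hB : B.Nonempty)
    (h1 : Λ.tmul (Tr.mk w S w) (Tr.mk a B a) = Tr.mk w S w)
    (h2 : Λ.tmul (Tr.mk a B a) (Tr.mk b C b) = Tr.mk a B a) :
    Λ.tmul (Tr.mk w S w) (Tr.mk b C b) = Tr.mk w S w := by
  rw [le_iff hS] at h1 ⊢
  rw [le_iff hB] at h2
  obtain ⟨haw, hSB⟩ := h1
  obtain ⟨hba, hBC⟩ := h2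
  refine ⟨hba.trans haw, ?_⟩
  calc S ⊆ Λ.relRange B (w.drop a.length) := hSB
    _ ⊆ Λ.relRange (Λ.relRange C (a.drop b.length)) (w.drop a.length) :=
        relRange_mono hBC _
    _ = Λ.relRange C (a.drop b.length ++ w.drop a.length) := relRange_comp _ _ _
    _ = Λ.relRange C (w.drop b.length) := by rw [drop_trans hba haw]

theorem tmul_le_left {a b : List A} {B C : Set V}
    (h : Λ.tmul (Tr.mk a B a) (Tr.mk b C b) ≠ Tr.zero) :
    Λ.tmul (Λ.tmul (Tr.mk a B a) (Tr.mk b C b)) (Tr.mk a B a) =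
      Λ.tmul (Tr.mk a B a) (Tr.mk b C b) := by
  rcases tmul_shape (Λ := Λ) (a := a) (b := b) (B := B) (C := C) with h0 | ⟨m, _, hap, _, hne, heq⟩
  · exact absurd h0 h
  · rw [heq, le_iff hne]
    exact ⟨hap, Set.inter_subset_left⟩

theorem tmul_le_right {a b : List A} {B C : Set V}
    (h : Λ.tmul (Tr.mk a B a) (Tr.mk b C b) ≠ Tr.zero) :
    Λ.tmul (Λ.tmul (Tr.mk a B a) (Tr.mk b C b)) (Tr.mk b C b) =
      Λ.tmul (Tr.mk a B a) (Tr.mk b C b) := by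
  rcases tmul_shape (Λ := Λ) (a := a) (b := b) (B := B) (C := C) with h0 | ⟨m, _, _, hbp, hne, heq⟩
  · exact absurd h0 h
  · rw [heq, le_iff hne]
    exact ⟨hbp, Set.inter_subset_right⟩

theorem le_glb (hW : Λ.IsWLR) {w a b : List A} {S B C : Set V}
    (hw : w ∈ Λ.LStar) (hS : S.Nonempty) (hB : B ∈ Λ.𝒜) (hC : C ∈ Λ.𝒜)
    (h1 : Λ.tmul (Tr.mk w S w) (Tr.mk a B a) = Tr.mk w S w)
    (h2 : Λ.tmul (Tr.mk w S w) (Tr.mk b C b) = Tr.mk w S w) :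
    Λ.tmul (Tr.mk a B a) (Tr.mk b C b) ≠ Tr.zero ∧
      Λ.tmul (Tr.mk w S w) (Λ.tmul (Tr.mk a B a) (Tr.mk b C b)) = Tr.mk w S w := by
  rw [le_iff hS] at h1 h2
  obtain ⟨haw, hSB⟩ := h1
  obtain ⟨hbw, hSC⟩ := h2
  rcases List.prefix_or_prefix_of_prefix haw hbw with hab | hba
  · -- a <+: b, the meet is at level b
    have key : S ⊆ Λ.relRange (Λ.relRange B (b.drop a.length) ∩ C) (w.drop b.length) := by
      rcases eq_or_ne (w.drop b.length) [] with hwb | hwb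
      · have hbweq : b = w := by
          refine hbw.eq_of_length (le_antisymm hbw.length_le ?_)
          have := List.drop_eq_nil_iff.mp hwb
          omega
        subst hbweq
        rw [List.drop_length, relRange_nil]
        refine Set.subset_inter hSB (by simpa only [List.drop_length, relRange_nil] using hSC)
      · rw [hW.wlr _ (relRange_mem' hW.toIsLS hB (LStar_drop (LStar_prefix hbw hw) _))
            C hC _ (LStar_drop hw _) hwb]
        refine Set.subset_inter ?_ hSC
        rw [relRange_comp, drop_trans hab hbw]
        exact hSB
    have hne : (Λ.relRange B (b.drop a.length) ∩ C).Nonempty := by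
      obtain ⟨s, hs⟩ := hS
      exact nonempty_of_relRange ⟨s, key hs⟩
    rw [tmul_of_prefix_left hab hne]
    refine ⟨by simp, ?_⟩
    rw [le_iff hS]
    exact ⟨hbw, key⟩
  · -- b <+: a, the meet is at level a
    have key : S ⊆ Λ.relRange (B ∩ Λ.relRange C (a.drop b.length)) (w.drop a.length) := by
      rcases eq_or_ne (w.drop a.length) [] with hwa | hwa
      · have haweq : a = w := by
          refine haw.eq_of_length (le_antisymm haw.length_le ?_)
          have := List.drop_eq_nil_iff.mp hwa
          omega
        subst haweq
        rw [List.drop_length, relRange_nil]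
        exact Set.subset_inter (by simpa only [List.drop_length, relRange_nil] using hSB) hSC
      · rw [hW.wlr _ hB _ (relRange_mem' hW.toIsLS hC (LStar_drop (LStar_prefix haw hw) _))
            _ (LStar_drop hw _) hwa]
        refine Set.subset_inter hSB ?_
        rw [relRange_comp, drop_trans hba haw]
        exact hSC
    have hne : (B ∩ Λ.relRange C (a.drop b.length)).Nonempty := by
      obtain ⟨s, hs⟩ := hS
      exact nonempty_of_relRange ⟨s, key hs⟩
    rw [tmul_of_prefix_right hba hne]
    refine ⟨by simp, ?_⟩
    rw [le_iff hS]
    exact ⟨haw, key⟩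

theorem tmul_mem_ESet (hLS : Λ.IsLS) {p q : Tr V A} (hp : p ∈ Λ.ESet) (hq : q ∈ Λ.ESet) :
    Λ.tmul p q ∈ Λ.ESet := by
  rcases hp with rfl | ⟨a, B, rfl, ha, hBa, hBne⟩
  · rw [zero_tmul]; exact zero_mem_ESet
  rcases hq with rfl | ⟨b, C, rfl, hb, hCb, hCne⟩
  · rw [tmul_zero]; exact zero_mem_ESet
  rcases tmul_shape (Λ := Λ) (a := a) (b := b) (B := B) (C := C) with h0 | ⟨m, hm, hap, hbp, hne, heq⟩
  · rw [h0]; exact zero_mem_ESet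
  rw [heq]
  have hmL : m ∈ Λ.LStar := by rcases hm with rfl | rfl <;> assumption
  refine mk_mem_ESet hmL ⟨?_, ?_⟩ hne
  · exact hLS.inter_mem _ (relRange_mem' hLS hBa.1 (LStar_drop hmL _)) _
      (relRange_mem' hLS hCb.1 (LStar_drop hmL _))
  · rcases hm with rfl | rfl
    · refine Set.inter_subset_left.trans ?_
      simpa only [List.drop_length, relRange_nil] using hBa.2
    · refine Set.inter_subset_right.trans ?_
      simpa only [List.drop_length, relRange_nil] using hCb.2

/-! ### Filters in `E(S)` -/

theorem mem_filter_shape {ξ : Set (Tr V A)} (hf : Λ.IsFilterES ξ) {t : Tr V A} (h : t ∈ ξ) :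
    ∃ a B, t = Tr.mk a B a ∧ a ∈ Λ.LStar ∧ B ∈ Λ.Aset a ∧ B.Nonempty := by
  obtain ⟨hE, hz⟩ := hf.2.1 t h
  rcases hE with h0 | ⟨a, B, rfl, h1, h2, h3⟩
  · exact absurd h0 hz
  · exact ⟨a, B, rfl, h1, h2, h3⟩

theorem mem_mk_facts {ξ : Set (Tr V A)} (hf : Λ.IsFilterES ξ) {w : List A} {D : Set V}
    (h : Tr.mk w D w ∈ ξ) : w ∈ Λ.LStar ∧ D ∈ Λ.Aset w ∧ D.Nonempty := by
  obtain ⟨a, B, heq, h1, h2, h3⟩ := mem_filter_shape hf h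
  rw [Tr.mk.injEq] at heq
  obtain ⟨hwa, hDB, -⟩ := heq
  subst hwa; subst hDB
  exact ⟨h1, h2, h3⟩

theorem filter_up {ξ : Set (Tr V A)} (hf : Λ.IsFilterES ξ) {w u : List A} {C D : Set V}
    (hmem : Tr.mk w D w ∈ ξ) (hu : u <+: w) (hC : C ∈ Λ.𝒜) (hCr : C ⊆ Λ.rangeL u)
    (hsub : D ⊆ Λ.relRange C (w.drop u.length)) : Tr.mk u C u ∈ ξ := by
  obtain ⟨hwL, hDa, hDne⟩ := mem_mk_facts hf hmem
  have hCne : C.Nonempty := nonempty_of_relRange (hDne.mono hsub)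
  have hqE : Tr.mk u C u ∈ Λ.ESet := mk_mem_ESet (LStar_prefix hu hwL) ⟨hC, hCr⟩ hCne
  refine hf.2.2.2 _ hmem _ hqE ?_
  rw [le_iff hDne]
  exact ⟨hu, hsub⟩

theorem filter_up_level {ξ : Set (Tr V A)} (hf : Λ.IsFilterES ξ) {w : List A} {C D : Set V}
    (hmem : Tr.mk w D w ∈ ξ) (hC : C ∈ Λ.𝒜) (hCr : C ⊆ Λ.rangeL w)
    (hsub : D ⊆ C) : Tr.mk w C w ∈ ξ :=
  filter_up hf hmem (List.prefix_refl w) hC hCr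
    (by simpa only [List.drop_length, relRange_nil] using hsub)

theorem filter_mul_of_prefix {ξ : Set (Tr V A)} (hf : Λ.IsFilterES ξ) {u w : List A}
    {B C : Set V} (h1 : Tr.mk u B u ∈ ξ) (h2 : Tr.mk w C w ∈ ξ) (hu : u <+: w) :
    Tr.mk w (Λ.relRange B (w.drop u.length) ∩ C) w ∈ ξ := by
  have hm := hf.2.2.1 _ h1 _ h2
  by_cases hne : (Λ.relRange B (w.drop u.length) ∩ C).Nonempty
  · rwa [tmul_of_prefix_left hu hne] at hm
  · exfalso
    have hz : Λ.tmul (Tr.mk u B u) (Tr.mk w C w) = Tr.zero := by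
      rw [tmul_mk, if_neg (fun hc => hne hc.2), if_neg ?_]
      rintro ⟨hwu, hne2⟩
      have huw : u = w := (hwu.eq_of_length (le_antisymm hwu.length_le hu.length_le)).symm
      subst huw
      simp only [List.drop_length, relRange_nil] at hne hne2
      exact hne hne2
    rw [hz] at hm
    exact (hf.2.1 _ hm).2 rfl

theorem filter_comparable {ξ : Set (Tr V A)} (hf : Λ.IsFilterES ξ) {u w : List A}
    {B C : Set V} (h1 : Tr.mk u B u ∈ ξ) (h2 : Tr.mk w C w ∈ ξ) :
    u <+: w ∨ w <+: u := by
  have hm := hf.2.2.1 _ h1 _ h2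
  have hz := (hf.2.1 _ hm).2
  by_contra hcon
  push_neg at hcon
  rw [tmul_mk, if_neg (fun h => hcon.1 h.1), if_neg (fun h => hcon.2 h.1)] at hz
  exact hz rfl

/-! ### Characters and filters -/

theorem charOf_eq_true_iff {ξ : Set (Tr V A)} {t : Tr V A} :
    Λ.charOf ξ t = true ↔ t ∈ ξ := by
  unfold LblSp.charOf
  split_ifs with h <;> simp [h]

theorem isChar_charOf {ξ : Set (Tr V A)} (hf : Λ.IsFilterES ξ) : Λ.IsChar (Λ.charOf ξ) := by
  have hzero : (Tr.zero : Tr V A) ∉ ξ := fun h => (hf.2.1 _ h).2 rfl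
  refine ⟨?_, ?_, ?_, ?_⟩
  · obtain ⟨t, ht⟩ := hf.1
    exact ⟨t, charOf_eq_true_iff.mpr ht⟩
  · intro e he
    have : e ∉ ξ := fun h => he (hf.2.1 _ h).1
    simp [LblSp.charOf, this]
  · simp [LblSp.charOf, hzero]
  · intro e heE f hfE
    by_cases he : e ∈ ξ <;> by_cases hff : f ∈ ξ
    · have hm : Λ.tmul e f ∈ ξ := hf.2.2.1 _ he _ hff
      rw [charOf_eq_true_iff.mpr hm, charOf_eq_true_iff.mpr he, charOf_eq_true_iff.mpr hff]
      rfl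
    · have hm : Λ.tmul e f ∉ ξ := by
        intro hm
        obtain ⟨a, B, rfl, -, -, -⟩ := mem_filter_shape hf he
        rcases id hfE with rfl | ⟨b, C, rfl, -, -, -⟩
        · rw [tmul_zero] at hm; exact hzero hm
        · exact hff (hf.2.2.2 _ hm _ hfE (tmul_le_right (hf.2.1 _ hm).2))
      have h1 : Λ.charOf ξ (Λ.tmul e f) = false := by simp [LblSp.charOf, hm]
      have h2 : Λ.charOf ξ f = false := by simp [LblSp.charOf, hff]
      rw [h1, h2, Bool.and_false]
    · have hm : Λ.tmul e f ∉ ξ := by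
        intro hm
        rcases id heE with rfl | ⟨a, B, rfl, -, -, -⟩
        · rw [zero_tmul] at hm; exact hzero hm
        rcases id hfE with rfl | ⟨b, C, rfl, -, -, -⟩
        · rw [tmul_zero] at hm; exact hzero hm
        · exact he (hf.2.2.2 _ hm _ heE (tmul_le_left (hf.2.1 _ hm).2))
      have h1 : Λ.charOf ξ (Λ.tmul e f) = false := by simp [LblSp.charOf, hm]
      have h2 : Λ.charOf ξ e = false := by simp [LblSp.charOf, he]
      rw [h1, h2, Bool.false_and]
    · have hm : Λ.tmul e f ∉ ξ := by
        intro hm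
        rcases id heE with rfl | ⟨a, B, rfl, -, -, -⟩
        · rw [zero_tmul] at hm; exact hzero hm
        rcases id hfE with rfl | ⟨b, C, rfl, -, -, -⟩
        · rw [tmul_zero] at hm; exact hzero hm
        · exact he (hf.2.2.2 _ hm _ heE (tmul_le_left (hf.2.1 _ hm).2))
      have h1 : Λ.charOf ξ (Λ.tmul e f) = false := by simp [LblSp.charOf, hm]
      have h2 : Λ.charOf ξ e = false := by simp [LblSp.charOf, he]
      rw [h1, h2, Bool.false_and]

theorem isFilter_setOf_char {φ : Tr V A → Bool} (hφ : Λ.IsChar φ) :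
    Λ.IsFilterES {e | φ e = true} := by
  have hESet : ∀ t, φ t = true → t ∈ Λ.ESet := by
    intro t ht
    by_contra h
    rw [hφ.2.1 t h] at ht
    exact Bool.false_ne_true ht
  refine ⟨hφ.1, ?_, ?_, ?_⟩
  · intro t ht
    refine ⟨hESet t ht, ?_⟩
    rintro rfl
    rw [Set.mem_setOf_eq, hφ.2.2.1] at ht
    exact Bool.false_ne_true ht
  · intro p hp q hq
    have := hφ.2.2.2 p (hESet p hp) q (hESet q hq)
    rw [Set.mem_setOf_eq, this, hp, hq]
    rfl
  · intro p hp q hqE heq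
    have h1 := hφ.2.2.2 p (hESet p hp) q hqE
    rw [heq, hp] at h1
    rw [Set.mem_setOf_eq]
    cases hq : φ q
    · rw [hq, Bool.and_false] at h1; exact absurd h1.symm Bool.false_ne_true
    · rfl

theorem charOf_setOf_char {φ : Tr V A → Bool} : Λ.charOf {e | φ e = true} = φ := by
  funext t
  simp only [LblSp.charOf, Set.mem_setOf_eq]
  split_ifs with h
  · exact h.symm
  · exact ((Bool.not_eq_true _).mp h).symm

/-! ### The ultrafilter criterion -/

theorem mem_ultra_of_compat (hW : Λ.IsWLR) {U : Set (Tr V A)} (hU : Λ.IsUltraES U)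
    {a : List A} {B : Set V} (haL : a ∈ Λ.LStar) (hBa : B ∈ Λ.Aset a) (hBne : B.Nonempty)
    (hcompat : ∀ u ∈ U, Λ.tmul u (Tr.mk a B a) ≠ Tr.zero) : Tr.mk a B a ∈ U := by
  have heE : Tr.mk a B a ∈ Λ.ESet := mk_mem_ESet haL hBa hBne
  set e := Tr.mk a B a with he_def
  set W : Set (Tr V A) :=
    {q | q ∈ Λ.ESet ∧ ∃ u ∈ U, Λ.tmul (Λ.tmul u e) q = Λ.tmul u e} with hW_def
  -- a key step: x := u*e is below any (tmul u' e) with u = tmul of things...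
  have hne_of_mem : ∀ q ∈ W, q ≠ Tr.zero := by
    rintro q ⟨-, u, hu, hle⟩ rfl
    rw [tmul_zero] at hle
    exact hcompat u hu hle.symm
  -- x ≤ q for q ∈ W with shapes
  have hUW : U ⊆ W := by
    intro u hu
    obtain ⟨c, D, hueq, -, -, -⟩ := mem_filter_shape hU.1 hu
    refine ⟨(hU.1.2.1 u hu).1, u, hu, ?_⟩
    rw [hueq]
    exact tmul_le_left (hueq ▸ hcompat u hu)
  have heW : e ∈ W := by
    obtain ⟨u, hu⟩ := hU.1.1
    obtain ⟨c, D, hueq, -, -, -⟩ := mem_filter_shape hU.1 hu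
    refine ⟨heE, u, hu, ?_⟩
    rw [hueq]
    exact tmul_le_right (hueq ▸ hcompat u hu)
  -- main: W is a filter
  have hWf : Λ.IsFilterES W := by
    refine ⟨⟨e, heW⟩, fun t ht => ⟨ht.1, hne_of_mem t ht⟩, ?_, ?_⟩
    · -- products
      rintro q₁ hq₁ q₂ hq₂
      have hq₁z := hne_of_mem _ hq₁
      have hq₂z := hne_of_mem _ hq₂
      obtain ⟨hq₁E, u₁, hu₁, hle₁⟩ := hq₁
      obtain ⟨hq₂E, u₂, hu₂, hle₂⟩ := hq₂
      rcases hq₁E with h0 | ⟨b₁, C₁, rfl, hb₁, hC₁, hC₁ne⟩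
      · exact absurd h0 hq₁z
      rcases hq₂E with h0 | ⟨b₂, C₂, rfl, hb₂, hC₂, hC₂ne⟩
      · exact absurd h0 hq₂z
      obtain ⟨c₁, D₁, hu₁eq, hc₁L, hD₁, hD₁ne⟩ := mem_filter_shape hU.1 hu₁
      obtain ⟨c₂, D₂, hu₂eq, hc₂L, hD₂, hD₂ne⟩ := mem_filter_shape hU.1 hu₂
      have hu : Λ.tmul u₁ u₂ ∈ U := hU.1.2.2.1 _ hu₁ _ hu₂
      obtain ⟨c, D, hueq, hcL, hD, hDne⟩ := mem_filter_shape hU.1 hu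
      -- x = (u₁ u₂) e, a nonzero idempotent below everything
      have hx : Λ.tmul (Λ.tmul u₁ u₂) e ≠ Tr.zero := hueq ▸ hcompat _ (hueq ▸ hu)
      rw [hueq] at hx
      rcases tmul_shape (Λ := Λ) (a := c) (b := a) (B := D) (C := B) with h0 | hsh
      · exact absurd h0 hx
      obtain ⟨m, hm, hcm, ham, hSne, hxeq⟩ := hsh
      set S := Λ.relRange D (m.drop c.length) ∩ Λ.relRange B (m.drop a.length) with hS_def
      have hmL : m ∈ Λ.LStar := by rcases hm with rfl | rfl <;> assumption
      -- x ≤ u = u₁u₂ ≤ u₁ and x ≤ e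
      have hxu : Λ.tmul (Tr.mk m S m) (Tr.mk c D c) = Tr.mk m S m := by
        have := tmul_le_left hx
        rwa [hxeq] at this
      have hxe : Λ.tmul (Tr.mk m S m) e = Tr.mk m S m := by
        have := tmul_le_right hx
        rwa [hxeq] at this
      have huu₁ : Λ.tmul (Tr.mk c D c) (Tr.mk c₁ D₁ c₁) = Tr.mk c D c := by
        have h' : Λ.tmul (Λ.tmul u₁ u₂) u₁ = Λ.tmul u₁ u₂ := by
          rw [hu₁eq, hu₂eq]
          exact tmul_le_left (by rw [← hu₁eq, ← hu₂eq, hueq]; simp)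
        rwa [hueq, hu₁eq] at h'
      have huu₂ : Λ.tmul (Tr.mk c D c) (Tr.mk c₂ D₂ c₂) = Tr.mk c D c := by
        have h' : Λ.tmul (Λ.tmul u₁ u₂) u₂ = Λ.tmul u₁ u₂ := by
          rw [hu₁eq, hu₂eq]
          exact tmul_le_right (by rw [← hu₁eq, ← hu₂eq, hueq]; simp)
        rwa [hueq, hu₂eq] at h'
      have hxu₁ : Λ.tmul (Tr.mk m S m) (Tr.mk c₁ D₁ c₁) = Tr.mk m S m :=
        le_trans' hSne hDne hxu huu₁
      have hxu₂ : Λ.tmul (Tr.mk m S m) (Tr.mk c₂ D₂ c₂) = Tr.mk m S m :=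
        le_trans' hSne hDne hxu huu₂
      -- x ≤ tmul u₁ e ≤ q₁
      have hy₁ := le_glb hW hmL hSne hD₁.1 hBa.1 hxu₁ hxe
      have hy₂ := le_glb hW hmL hSne hD₂.1 hBa.1 hxu₂ hxe
      -- shapes of y₁ = tmul u₁ e
      rcases tmul_shape (Λ := Λ) (a := c₁) (b := a) (B := D₁) (C := B) with h0 | hsh₁
      · exact absurd h0 hy₁.1
      obtain ⟨m₁, -, -, -, hS₁ne, hy₁eq⟩ := hsh₁
      rcases tmul_shape (Λ := Λ) (a := c₂) (b := a) (B := D₂) (C := B) with h0 | hsh₂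
      · exact absurd h0 hy₂.1
      obtain ⟨m₂, -, -, -, hS₂ne, hy₂eq⟩ := hsh₂
      have hxq₁ : Λ.tmul (Tr.mk m S m) (Tr.mk b₁ C₁ b₁) = Tr.mk m S m := by
        refine le_trans' hSne hS₁ne (by rw [← hy₁eq]; exact hy₁.2) ?_
        have := hle₁
        rw [hu₁eq, hy₁eq] at this
        exact this
      have hxq₂ : Λ.tmul (Tr.mk m S m) (Tr.mk b₂ C₂ b₂) = Tr.mk m S m := by
        refine le_trans' hSne hS₂ne (by rw [← hy₂eq]; exact hy₂.2) ?_
        have := hle₂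
        rw [hu₂eq, hy₂eq] at this
        exact this
      have hglb := le_glb hW hmL hSne hC₁.1 hC₂.1 hxq₁ hxq₂
      refine ⟨tmul_mem_ESet hW.toIsLS (mk_mem_ESet hb₁ hC₁ hC₁ne) (mk_mem_ESet hb₂ hC₂ hC₂ne),
        Λ.tmul u₁ u₂, hu, ?_⟩
      rw [hueq, hxeq]
      exact hglb.2
    · -- upward closed
      rintro p ⟨hpE, u, hu, hlep⟩ q hqE hle
      have hpz : p ≠ Tr.zero := hne_of_mem p ⟨hpE, u, hu, hlep⟩
      rcases hpE with h0 | ⟨bp, Cp, rfl, hbp, hCp, hCpne⟩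
      · exact absurd h0 hpz
      have hqz : q ≠ Tr.zero := by
        rintro rfl
        rw [tmul_zero] at hle
        exact hpz hle.symm
      rcases hqE with h0 | ⟨bq, Cq, rfl, hbq, hCq, hCqne⟩
      · exact absurd h0 hqz
      obtain ⟨c, D, hueq, hcL, hD, hDne⟩ := mem_filter_shape hU.1 hu
      have hx : Λ.tmul u e ≠ Tr.zero := hcompat u hu
      rw [hueq] at hx
      rcases tmul_shape (Λ := Λ) (a := c) (b := a) (B := D) (C := B) with h0 | hsh
      · exact absurd h0 hx
      obtain ⟨m, hm, hcm, ham, hSne, hxeq⟩ := hsh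
      refine ⟨Or.inr ⟨bq, Cq, rfl, hbq, hCq, hCqne⟩, u, hu, ?_⟩
      rw [hueq, hxeq]
      refine le_trans' hSne hCpne ?_ hle
      rw [← hxeq]
      rw [hueq] at hlep
      rw [hxeq] at hlep ⊢
      exact hlep
  have hUeq := hU.2 W hWf hUW
  rw [hUeq]
  exact heW

/-! ### The cutting map `Hcut` on filters -/

theorem mem_Hcut_iff (hLS : Λ.IsLS) {ξ : Set (Tr V A)} (hf : Λ.IsFilterES ξ) (γ : List A)
    {δ : List A} {B : Set V} :
    Tr.mk δ B δ ∈ Λ.Hcut γ ξ ↔ B ∈ Λ.Aset δ ∧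
      Tr.mk (γ ++ δ) (B ∩ Λ.rangeL (γ ++ δ)) (γ ++ δ) ∈ ξ := by
  unfold LblSp.Hcut
  rcases eq_or_ne γ [] with rfl | hγ
  · rw [if_pos rfl]
    simp only [List.nil_append]
    constructor
    · intro h
      obtain ⟨-, hBa, -⟩ := mem_mk_facts hf h
      rw [Set.inter_eq_left.mpr hBa.2]
      exact ⟨hBa, h⟩
    · rintro ⟨hBa, h⟩
      rwa [Set.inter_eq_left.mpr hBa.2] at h
  · rw [if_neg hγ]
    constructor
    · rintro ⟨δ₂, B₂, heq, hB₂, D, hD, hDB⟩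
      rw [Tr.mk.injEq] at heq
      obtain ⟨h1, h2, -⟩ := heq
      subst h1; subst h2
      obtain ⟨hγδL, hDa, hDne⟩ := mem_mk_facts hf hD
      exact ⟨hB₂, filter_up_level hf hD (inter_rangeL_mem hLS hB₂.1 hγδL)
        Set.inter_subset_right (Set.subset_inter hDB hDa.2)⟩
    · rintro ⟨hBa, h⟩
      exact ⟨δ, B, rfl, hBa, _, h, Set.inter_subset_left⟩

theorem mem_Hcut_shape {ξ : Set (Tr V A)} (hf : Λ.IsFilterES ξ) (γ : List A) {t : Tr V A}
    (h : t ∈ Λ.Hcut γ ξ) : ∃ δ B, t = Tr.mk δ B δ := by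
  unfold LblSp.Hcut at h
  rcases eq_or_ne γ [] with rfl | hγ
  · rw [if_pos rfl] at h
    obtain ⟨a, B, heq, -, -, -⟩ := mem_filter_shape hf h
    exact ⟨a, B, heq⟩
  · rw [if_neg hγ] at h
    obtain ⟨δ, B, heq, -, -⟩ := h
    exact ⟨δ, B, heq⟩

theorem isFilter_Hcut (hW : Λ.IsWLR) {ξ : Set (Tr V A)} (hf : Λ.IsFilterES ξ)
    {γ : List A} {X₀ : Set V} (hX : Tr.mk γ X₀ γ ∈ ξ) :
    Λ.IsFilterES (Λ.Hcut γ ξ) := by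
  have hLS := hW.toIsLS
  obtain ⟨hγL, hX₀a, hX₀ne⟩ := mem_mk_facts hf hX
  have hHm := fun {δ B} => mem_Hcut_iff (Λ := Λ) hLS hf γ (δ := δ) (B := B)
  refine ⟨?_, ?_, ?_, ?_⟩
  · refine ⟨Tr.mk [] X₀ [], hHm.mpr ⟨⟨hX₀a.1, by rw [rangeL_nil]; exact Set.subset_univ _⟩, ?_⟩⟩
    simp only [List.append_nil]
    rwa [Set.inter_eq_left.mpr hX₀a.2]
  · intro t ht
    obtain ⟨δ, B, rfl⟩ := mem_Hcut_shape hf γ ht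
    obtain ⟨hBa, hmem⟩ := hHm.mp ht
    obtain ⟨hγδL, hsa, hsne⟩ := mem_mk_facts hf hmem
    exact ⟨mk_mem_ESet (LStar_append_right hγδL) hBa (hsne.mono Set.inter_subset_left),
      by simp⟩
  · intro p hp q hq
    obtain ⟨δ, B, rfl⟩ := mem_Hcut_shape hf γ hp
    obtain ⟨ε, C, rfl⟩ := mem_Hcut_shape hf γ hq
    obtain ⟨hBa, hP⟩ := hHm.mp hp
    obtain ⟨hCa, hQ⟩ := hHm.mp hq
    obtain ⟨hγδL, hPa, hPne⟩ := mem_mk_facts hf hP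
    obtain ⟨hγεL, hQa, hQne⟩ := mem_mk_facts hf hQ
    have hδL : δ ∈ Λ.LStar := LStar_append_right hγδL
    have hεL : ε ∈ Λ.LStar := LStar_append_right hγεL
    rcases filter_comparable hf hP hQ with hpre | hpre
    · have hδε : δ <+: ε := (List.prefix_append_right_inj γ).mp hpre
      have hR := filter_mul_of_prefix hf hP hQ hpre
      rw [drop_append_cancel γ hδε] at hR
      set Z := Λ.relRange B (ε.drop δ.length) ∩ C with hZ
      have hRZ : Λ.relRange (B ∩ Λ.rangeL (γ ++ δ)) (ε.drop δ.length) ∩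
          (C ∩ Λ.rangeL (γ ++ ε)) ⊆ Z ∩ Λ.rangeL (γ ++ ε) := by
        intro v hv
        exact ⟨⟨relRange_mono Set.inter_subset_left _ hv.1, hv.2.1⟩, hv.2.2⟩
      have hZne : Z.Nonempty :=
        ((mem_mk_facts hf hR).2.2.mono hRZ).mono Set.inter_subset_left
      rw [tmul_of_prefix_left hδε hZne]
      refine hHm.mpr ⟨⟨hLS.inter_mem _ (relRange_mem' hLS hBa.1 (LStar_drop hεL _)) _ hCa.1,
        Set.inter_subset_right.trans hCa.2⟩, ?_⟩
      exact filter_up_level hf hR (inter_rangeL_mem hLS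
        (hLS.inter_mem _ (relRange_mem' hLS hBa.1 (LStar_drop hεL _)) _ hCa.1) hγεL)
        Set.inter_subset_right hRZ
    · have hεδ : ε <+: δ := (List.prefix_append_right_inj γ).mp hpre
      have hR := filter_mul_of_prefix hf hQ hP hpre
      rw [drop_append_cancel γ hεδ] at hR
      set Z := B ∩ Λ.relRange C (δ.drop ε.length) with hZ
      have hRZ : Λ.relRange (C ∩ Λ.rangeL (γ ++ ε)) (δ.drop ε.length) ∩
          (B ∩ Λ.rangeL (γ ++ δ)) ⊆ Z ∩ Λ.rangeL (γ ++ δ) := by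
        intro v hv
        exact ⟨⟨hv.2.1, relRange_mono Set.inter_subset_left _ hv.1⟩, hv.2.2⟩
      have hZne : Z.Nonempty :=
        ((mem_mk_facts hf hR).2.2.mono hRZ).mono Set.inter_subset_left
      rw [tmul_of_prefix_right hεδ hZne]
      refine hHm.mpr ⟨⟨hLS.inter_mem _ hBa.1 _ (relRange_mem' hLS hCa.1 (LStar_drop hδL _)),
        Set.inter_subset_left.trans hBa.2⟩, ?_⟩
      exact filter_up_level hf hR (inter_rangeL_mem hLS
        (hLS.inter_mem _ hBa.1 _ (relRange_mem' hLS hCa.1 (LStar_drop hδL _))) hγδL)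
        Set.inter_subset_right hRZ
  · intro p hp q hqE hle
    obtain ⟨δ, B, rfl⟩ := mem_Hcut_shape hf γ hp
    obtain ⟨hBa, hP⟩ := hHm.mp hp
    obtain ⟨hγδL, hPa, hPne⟩ := mem_mk_facts hf hP
    have hBne : B.Nonempty := hPne.mono Set.inter_subset_left
    have hqz : q ≠ Tr.zero := by
      rintro rfl
      rw [tmul_zero] at hle
      exact absurd hle.symm (by simp)
    rcases id hqE with h0 | ⟨ε, C, rfl, hεL, hCa, hCne⟩
    · exact absurd h0 hqz
    rw [le_iff hBne] at hle
    obtain ⟨hεδ, hBrel⟩ := hle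
    have hγεL : γ ++ ε ∈ Λ.LStar := LStar_prefix ((List.prefix_append_right_inj γ).mpr hεδ) hγδL
    refine hHm.mpr ⟨hCa, ?_⟩
    refine filter_up hf hP ((List.prefix_append_right_inj γ).mpr hεδ)
      (inter_rangeL_mem hLS hCa.1 hγεL) Set.inter_subset_right ?_
    rw [drop_append_cancel γ hεδ,
      relRange_inter_rangeL hW hCa.1 hγεL (LStar_drop (LStar_append_right hγδL) _)]
    have hw2 : γ ++ ε ++ δ.drop ε.length = γ ++ δ := by
      rw [List.append_assoc, prefix_append_drop hεδ]
    rw [hw2]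
    exact fun v hv => ⟨hBrel hv.1, hv.2⟩

/-! ### Words and `HasWord` under `Hcut` -/

theorem wprefix_inr_iff {β : List A} {h : ℕ → A} :
    WPrefix β (Sum.inr h) ↔ ∀ (i : ℕ) (hi : i < β.length), β[i] = h i := by
  constructor
  · intro heq i hi
    have heq' : β = List.ofFn (fun i : Fin β.length => h ↑i) := heq
    rw [List.getElem_of_eq heq' hi, List.getElem_ofFn]
  · intro hpt
    refine List.ext_getElem (by simp) ?_
    intro i h₁ h₂
    simp only [List.getElem_ofFn]
    exact hpt i h₁

theorem wprefix_wappend_iff (γ δ : List A) (α' : Word A) :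
    WPrefix (γ ++ δ) (wappend γ α') ↔ WPrefix δ α' := by
  rcases α' with l | f
  · show (γ ++ δ) <+: (γ ++ l) ↔ δ <+: l
    exact List.prefix_append_right_inj γ
  · simp only [wappend, Sum.elim_inr]
    rw [wprefix_inr_iff, wprefix_inr_iff]
    constructor
    · intro hL i hi
      have hlen : γ.length + i < (γ ++ δ).length := by simp; omega
      have h2 := hL (γ.length + i) hlen
      rw [List.getElem_append_right (by omega), dif_neg (by omega)] at h2
      simpa [Nat.add_sub_cancel_left] using h2
    · intro hR i hi
      have hi' : i < γ.length + δ.length := by simpa using hi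
      by_cases hig : i < γ.length
      · rw [List.getElem_append_left hig, dif_pos hig]
        simp
      · rw [List.getElem_append_right (le_of_not_gt hig), dif_neg hig]
        exact hR (i - γ.length) (by omega)

theorem hasWord_Hcut (hLS : Λ.IsLS) {ξ : Set (Tr V A)} (hf : Λ.IsFilterES ξ) {γ : List A}
    {α' : Word A} (hw : Λ.HasWord ξ (wappend γ α')) : Λ.HasWord (Λ.Hcut γ ξ) α' := by
  intro δ hδ
  constructor
  · rintro ⟨B, hB⟩
    obtain ⟨-, hmem⟩ := (mem_Hcut_iff hLS hf γ).mp hB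
    have hγδ : γ ++ δ ≠ [] := by simp [hδ]
    rw [← wprefix_wappend_iff γ δ α']
    exact (hw (γ ++ δ) hγδ).mp ⟨_, hmem⟩
  · intro hp
    have hγδ : γ ++ δ ≠ [] := by simp [hδ]
    obtain ⟨B', hB'⟩ := (hw (γ ++ δ) hγδ).mpr ((wprefix_wappend_iff γ δ α').mpr hp)
    obtain ⟨hγδL, hB'a, hB'ne⟩ := mem_mk_facts hf hB'
    refine ⟨B', (mem_Hcut_iff hLS hf γ).mpr ⟨⟨hB'a.1, hB'a.2.trans (rangeL_append_subset γ δ)⟩, ?_⟩⟩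
    rwa [Set.inter_eq_left.mpr hB'a.2]

/-! ### `Hcut` preserves ultrafilters -/

theorem isUltra_Hcut (hW : Λ.IsWLR) {U : Set (Tr V A)} (hU : Λ.IsUltraES U)
    {γ : List A} {D₀ : Set V} (hγU : Tr.mk γ D₀ γ ∈ U) : Λ.IsUltraES (Λ.Hcut γ U) := by
  have hLS := hW.toIsLS
  rcases eq_or_ne γ [] with rfl | hγ
  · unfold LblSp.Hcut; rw [if_pos rfl]; exact hU
  obtain ⟨hγL, hD₀a, hD₀ne⟩ := mem_mk_facts hU.1 hγU
  have hrγ : Λ.rangeL γ ∈ Λ.𝒜 := hLS.range_mem γ hγL hγ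
  have hg₀ : Tr.mk γ (Λ.rangeL γ) γ ∈ U :=
    filter_up_level hU.1 hγU hrγ Set.Subset.rfl hD₀a.2
  refine ⟨isFilter_Hcut hW hU.1 hγU, ?_⟩
  intro ζ hζ hsub
  refine Set.Subset.antisymm hsub ?_
  intro q hq
  obtain ⟨ε, C, rfl, hεL, hCa, hCne⟩ := mem_filter_shape hζ hq
  have hzH : Tr.mk [] (Λ.rangeL γ) [] ∈ Λ.Hcut γ U := by
    refine (mem_Hcut_iff hLS hU.1 γ).mpr
      ⟨⟨hrγ, by rw [rangeL_nil]; exact Set.subset_univ _⟩, ?_⟩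
    simp only [List.append_nil]
    rwa [Set.inter_self]
  have hz : Tr.mk [] (Λ.rangeL γ) [] ∈ ζ := hsub hzH
  have hw₁ := filter_mul_of_prefix hζ hz hq (List.nil_prefix)
  simp only [List.length_nil, List.drop_zero] at hw₁
  rw [← rangeL_append] at hw₁
  have hw₁ne := (mem_mk_facts hζ hw₁).2.2
  have hCγε : (C ∩ Λ.rangeL (γ ++ ε)).Nonempty := by
    obtain ⟨v, hv⟩ := hw₁ne; exact ⟨v, hv.2, hv.1⟩
  have hγεL : γ ++ ε ∈ Λ.LStar :=
    LStar_of_rangeL_nonempty (hCγε.mono Set.inter_subset_right)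
  set E' := C ∩ Λ.rangeL (γ ++ ε) with hE'def
  have hE'A : E' ∈ Λ.Aset (γ ++ ε) :=
    ⟨inter_rangeL_mem hLS hCa.1 hγεL, Set.inter_subset_right⟩
  have hcompat : ∀ u ∈ U, Λ.tmul u (Tr.mk (γ ++ ε) E' (γ ++ ε)) ≠ Tr.zero := by
    intro u hu
    obtain ⟨d, Bu, rfl, hdL, hBua, hBune⟩ := mem_filter_shape hU.1 hu
    have hu' : Λ.tmul (Tr.mk d Bu d) (Tr.mk γ (Λ.rangeL γ) γ) ∈ U := hU.1.2.2.1 _ hu _ hg₀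
    have hu'z := (hU.1.2.1 _ hu').2
    rcases tmul_shape (Λ := Λ) (a := d) (b := γ) (B := Bu) (C := Λ.rangeL γ) with
      h0 | ⟨m, hmd, hdm, hγm, hS₀ne, hu'eq⟩
    · exact absurd h0 hu'z
    rw [hu'eq] at hu'
    set S₀ := Λ.relRange Bu (m.drop d.length) ∩ Λ.relRange (Λ.rangeL γ) (m.drop γ.length)
      with hS₀def
    obtain ⟨hmL, hS₀a, hS₀ne'⟩ := mem_mk_facts hU.1 hu'
    set δ₁ := m.drop γ.length with hδ₁def
    have hm_eq : γ ++ δ₁ = m := prefix_append_drop hγm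
    have hpH : Tr.mk δ₁ S₀ δ₁ ∈ Λ.Hcut γ U := by
      refine (mem_Hcut_iff hLS hU.1 γ).mpr ⟨⟨hS₀a.1, ?_⟩, ?_⟩
      · refine Set.inter_subset_right.trans ?_
        rw [← rangeL_append]
        exact rangeL_append_subset γ δ₁
      · rw [hm_eq, Set.inter_eq_left.mpr hS₀a.2]
        exact hu'
    have hpζ := hsub hpH
    have ht₁ := hζ.2.2.1 _ hq _ hpζ
    have ht₁z := (hζ.2.1 _ ht₁).2
    rcases tmul_shape (Λ := Λ) (a := ε) (b := δ₁) (B := C) (C := S₀) with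
      h0 | ⟨m', hm', hεm', hδ₁m', hS₁ne, ht₁eq⟩
    · exact absurd h0 ht₁z
    rw [ht₁eq] at ht₁
    set S₁ := Λ.relRange C (m'.drop ε.length) ∩ Λ.relRange S₀ (m'.drop δ₁.length) with hS₁def
    obtain ⟨hm'L, hS₁a, hS₁ne'⟩ := mem_mk_facts hζ ht₁
    have hwmem := filter_mul_of_prefix hζ hz ht₁ (List.nil_prefix)
    simp only [List.length_nil, List.drop_zero] at hwmem
    rw [← rangeL_append] at hwmem
    set S := Λ.rangeL (γ ++ m') ∩ S₁ with hSdef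
    obtain ⟨hm'L2, hSa, hSne⟩ := mem_mk_facts hζ hwmem
    have hγm'L : γ ++ m' ∈ Λ.LStar := LStar_of_rangeL_nonempty (hSne.mono Set.inter_subset_left)
    have hm_pre : m <+: γ ++ m' := by
      rw [← hm_eq]
      exact (List.prefix_append_right_inj γ).mpr hδ₁m'
    have hxe' : Λ.tmul (Tr.mk (γ ++ m') S (γ ++ m')) (Tr.mk (γ ++ ε) E' (γ ++ ε)) =
        Tr.mk (γ ++ m') S (γ ++ m') := by
      rw [le_iff hSne]
      refine ⟨(List.prefix_append_right_inj γ).mpr hεm', ?_⟩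
      rw [drop_append_cancel γ hεm',
        relRange_inter_rangeL hW hCa.1 hγεL (LStar_drop hm'L ε.length)]
      have heq2 : γ ++ ε ++ m'.drop ε.length = γ ++ m' := by
        rw [List.append_assoc, prefix_append_drop hεm']
      rw [heq2]
      refine Set.subset_inter ?_ Set.inter_subset_left
      exact Set.inter_subset_right.trans Set.inter_subset_left
    have hxu : Λ.tmul (Tr.mk (γ ++ m') S (γ ++ m')) (Tr.mk d Bu d) =
        Tr.mk (γ ++ m') S (γ ++ m') := by
      rw [le_iff hSne]
      refine ⟨hdm.trans hm_pre, ?_⟩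
      have hdrop : m.drop d.length ++ m'.drop δ₁.length = (γ ++ m').drop d.length := by
        have h3 := drop_trans hdm hm_pre
        rwa [← hm_eq, drop_append_cancel γ hδ₁m', hm_eq] at h3
      calc S ⊆ Λ.relRange S₀ (m'.drop δ₁.length) :=
            Set.inter_subset_right.trans Set.inter_subset_right
        _ ⊆ Λ.relRange (Λ.relRange Bu (m.drop d.length)) (m'.drop δ₁.length) :=
            relRange_mono Set.inter_subset_left _
        _ = Λ.relRange Bu (m.drop d.length ++ m'.drop δ₁.length) := relRange_comp _ _ _
        _ = Λ.relRange Bu ((γ ++ m').drop d.length) := by rw [hdrop]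
    exact (le_glb hW hγm'L hSne hBua.1 hE'A.1 hxu hxe').1
  have he'U : Tr.mk (γ ++ ε) E' (γ ++ ε) ∈ U :=
    mem_ultra_of_compat hW hU hγεL hE'A hCγε hcompat
  exact (mem_Hcut_iff hLS hU.1 γ).mpr ⟨hCa, he'U⟩

/-! ### `Hcut` preserves tightness -/

/-- The map on characters corresponding to `Hcut γ`. -/
noncomputable def Fcut (γ : List A) (ψ : Tr V A → Bool) : Tr V A → Bool
  | Tr.zero => false
  | Tr.mk δ B δ' =>
      if δ' = δ ∧ B ∈ Λ.Aset δ then ψ (Tr.mk (γ ++ δ) (B ∩ Λ.rangeL (γ ++ δ)) (γ ++ δ))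
      else false

theorem Fcut_continuous (γ : List A) : Continuous (Fcut (Λ := Λ) γ) := by
  refine continuous_pi fun t => ?_
  rcases t with _ | ⟨δ, B, δ'⟩
  · exact continuous_const
  · simp only [Fcut]
    split_ifs
    · exact continuous_apply _
    · exact continuous_const

theorem Fcut_charOf (hLS : Λ.IsLS) (γ : List A) {ξ' : Set (Tr V A)} (hξ' : Λ.IsFilterES ξ') :
    Fcut (Λ := Λ) γ (Λ.charOf ξ') = Λ.charOf (Λ.Hcut γ ξ') := by
  funext t
  rcases t with _ | ⟨δ, B, δ'⟩
  · have hz : Tr.zero ∉ Λ.Hcut γ ξ' := by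
      intro h
      obtain ⟨δ, B, heq⟩ := mem_Hcut_shape hξ' γ h
      exact absurd heq (by simp)
    show false = Λ.charOf (Λ.Hcut γ ξ') Tr.zero
    simp [LblSp.charOf, hz]
  · show (if δ' = δ ∧ B ∈ Λ.Aset δ then _ else false) = _
    by_cases hc : δ' = δ ∧ B ∈ Λ.Aset δ
    · rw [if_pos hc]
      obtain ⟨rfl, hBA⟩ := hc
      by_cases hmem : Tr.mk (γ ++ δ') (B ∩ Λ.rangeL (γ ++ δ')) (γ ++ δ') ∈ ξ'
      · rw [charOf_eq_true_iff.mpr hmem,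
          charOf_eq_true_iff.mpr ((mem_Hcut_iff hLS hξ' γ).mpr ⟨hBA, hmem⟩)]
      · have h2 : Tr.mk δ' B δ' ∉ Λ.Hcut γ ξ' := fun h =>
          hmem ((mem_Hcut_iff hLS hξ' γ).mp h).2
        simp [LblSp.charOf, hmem, h2]
    · rw [if_neg hc]
      have h2 : Tr.mk δ B δ' ∉ Λ.Hcut γ ξ' := by
        intro h
        obtain ⟨δ₂, B₂, heq⟩ := mem_Hcut_shape hξ' γ h
        rw [Tr.mk.injEq] at heq
        obtain ⟨h1, h3, h4⟩ := heq
        refine hc ⟨h4.trans h1.symm, ?_⟩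
        have hδδ' : δ' = δ := h4.trans h1.symm
        subst hδδ'
        exact ((mem_Hcut_iff hLS hξ' γ).mp h).1
      simp [LblSp.charOf, h2]

theorem charOf_Hcut_tight (hW : Λ.IsWLR) {ξ : Set (Tr V A)} (hft : Λ.IsTightFilter ξ)
    {γ : List A} {X₀ : Set V} (hX : Tr.mk γ X₀ γ ∈ ξ) :
    Λ.charOf (Λ.Hcut γ ξ) ∈ Λ.tightSpectrum := by
  have hLS := hW.toIsLS
  have hf := hft.1
  constructor
  · exact isChar_charOf (isFilter_Hcut hW hf hX)
  · have hφ : Λ.charOf ξ ∈ closure {ψ | ∃ U, Λ.IsUltraES U ∧ ψ = Λ.charOf U} := hft.2.2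
    set O : Set (Tr V A → Bool) := {ψ | ψ (Tr.mk γ X₀ γ) = true} with hO
    have hOopen : IsOpen O := by
      have h3 : O = (fun ψ : Tr V A → Bool => ψ (Tr.mk γ X₀ γ)) ⁻¹' {true} := by
        ext ψ; simp [hO]
      rw [h3]
      exact (continuous_apply _).isOpen_preimage _ (isOpen_discrete _)
    have hφO : Λ.charOf ξ ∈ O := charOf_eq_true_iff.mpr hX
    have hstep : Λ.charOf ξ ∈
        closure (O ∩ {ψ | ∃ U, Λ.IsUltraES U ∧ ψ = Λ.charOf U}) :=
      hOopen.inter_closure ⟨hφO, hφ⟩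
    have h2 : Fcut (Λ := Λ) γ (Λ.charOf ξ) ∈
        closure (Fcut (Λ := Λ) γ '' (O ∩ {ψ | ∃ U, Λ.IsUltraES U ∧ ψ = Λ.charOf U})) :=
      mem_closure_image (Fcut_continuous γ).continuousAt hstep
    rw [Fcut_charOf hLS γ hf] at h2
    refine closure_mono ?_ h2
    rintro ψ ⟨ψ₀, ⟨hψO, U, hUu, rfl⟩, rfl⟩
    exact ⟨Λ.Hcut γ U, isUltra_Hcut hW hUu (charOf_eq_true_iff.mp hψO),
      Fcut_charOf hLS γ hUu.1⟩

/-! ### Computation of `s* e s` -/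

section Theta

variable {β γ δ : List A} {X B : Set V}

theorem smm₁ (h : β <+: δ) (hne : (Λ.relRange X (δ.drop β.length) ∩ B).Nonempty) :
    Λ.tmul (Λ.tmul (Tr.mk γ X β) (Tr.mk δ B δ)) (Tr.mk β X γ) =
      Tr.mk (γ ++ δ.drop β.length) (Λ.relRange X (δ.drop β.length) ∩ B)
        (γ ++ δ.drop β.length) := by
  have h1 : Λ.tmul (Tr.mk γ X β) (Tr.mk δ B δ) =
      Tr.mk (γ ++ δ.drop β.length) (Λ.relRange X (δ.drop β.length) ∩ B) δ := by
    rw [tmul_mk, if_pos ⟨h, hne⟩]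
  rw [h1]
  by_cases hδβ : δ <+: β
  · have hβδeq : β = δ := h.eq_of_length (le_antisymm h.length_le hδβ.length_le)
    subst hβδeq
    simp only [List.drop_length, relRange_nil, List.append_nil] at hne ⊢
    rw [tmul_mk, if_pos ⟨List.prefix_refl β, by
      simp only [List.drop_length, relRange_nil]
      rwa [Set.inter_eq_left.mpr Set.inter_subset_left]⟩]
    simp only [List.drop_length, relRange_nil, List.append_nil]
    rw [Set.inter_eq_left.mpr Set.inter_subset_left]
  · rw [tmul_mk, if_neg (fun hc => hδβ hc.1), if_pos ⟨h, by
      rwa [Set.inter_eq_left.mpr Set.inter_subset_left]⟩]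
    rw [Set.inter_eq_left.mpr Set.inter_subset_left]

theorem smm₂ (h : δ <+: β) (hne : (X ∩ Λ.relRange B (β.drop δ.length)).Nonempty) :
    Λ.tmul (Λ.tmul (Tr.mk γ X β) (Tr.mk δ B δ)) (Tr.mk β X γ) =
      Tr.mk γ (X ∩ Λ.relRange B (β.drop δ.length)) γ := by
  by_cases hβδ : β <+: δ
  · have hδβeq : δ = β := hβδ.eq_of_length (le_antisymm hβδ.length_le h.length_le) |>.symm
    subst hδβeq
    simp only [List.drop_length, relRange_nil] at hne ⊢
    rw [smm₁ (List.prefix_refl δ) (by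
      simp only [List.drop_length, relRange_nil]
      exact hne)]
    simp only [List.drop_length, relRange_nil, List.append_nil]
  · have h1 : Λ.tmul (Tr.mk γ X β) (Tr.mk δ B δ) =
        Tr.mk γ (X ∩ Λ.relRange B (β.drop δ.length)) β := by
      rw [tmul_mk, if_neg (fun hc => hβδ hc.1), if_pos ⟨h, hne⟩, prefix_append_drop h]
    rw [h1, tmul_mk, if_pos ⟨List.prefix_refl β, by
      simp only [List.drop_length, relRange_nil]
      rwa [Set.inter_eq_left.mpr Set.inter_subset_left]⟩]
    simp only [List.drop_length, relRange_nil, List.append_nil]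
    rw [Set.inter_eq_left.mpr Set.inter_subset_left]

theorem smm₀ (h1 : ¬(β <+: δ ∧ (Λ.relRange X (δ.drop β.length) ∩ B).Nonempty))
    (h2 : ¬(δ <+: β ∧ (X ∩ Λ.relRange B (β.drop δ.length)).Nonempty)) :
    Λ.tmul (Λ.tmul (Tr.mk γ X β) (Tr.mk δ B δ)) (Tr.mk β X γ) = Tr.zero := by
  rw [tmul_mk, if_neg h1, if_neg h2]
  exact zero_tmul _

theorem theta_zero {φ : Tr V A → Bool} (hchar : Λ.IsChar φ) :
    Λ.theta (Tr.mk β X γ) φ Tr.zero = false := by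
  simp only [LblSp.theta]
  rw [if_pos zero_mem_ESet]
  show φ (Λ.tmul (Λ.tmul (Tr.mk γ X β) Tr.zero) (Tr.mk β X γ)) = false
  rw [tmul_zero, zero_tmul]
  exact hchar.2.2.1

theorem theta_true_iff {φ : Tr V A → Bool} {ξ : Set (Tr V A)} (hchar : Λ.IsChar φ)
    (hf : Λ.IsFilterES ξ) (hmemφ : ∀ t : Tr V A, φ t = true ↔ t ∈ ξ)
    (heE : Tr.mk δ B δ ∈ Λ.ESet) :
    Λ.theta (Tr.mk β X γ) φ (Tr.mk δ B δ) = true ↔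
      ((β <+: δ ∧ Tr.mk (γ ++ δ.drop β.length)
          (Λ.relRange X (δ.drop β.length) ∩ B) (γ ++ δ.drop β.length) ∈ ξ) ∨
       (δ <+: β ∧ Tr.mk γ (X ∩ Λ.relRange B (β.drop δ.length)) γ ∈ ξ)) := by
  simp only [LblSp.theta]
  rw [if_pos heE]
  show φ (Λ.tmul (Λ.tmul (Tr.mk γ X β) (Tr.mk δ B δ)) (Tr.mk β X γ)) = true ↔ _
  by_cases c₁ : β <+: δ ∧ (Λ.relRange X (δ.drop β.length) ∩ B).Nonempty
  · rw [smm₁ c₁.1 c₁.2]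
    constructor
    · intro h; exact Or.inl ⟨c₁.1, (hmemφ _).mp h⟩
    · rintro (⟨-, hm⟩ | ⟨hδβ, hm⟩)
      · exact (hmemφ _).mpr hm
      · have hβδeq : β = δ := c₁.1.eq_of_length (le_antisymm c₁.1.length_le hδβ.length_le)
        subst hβδeq
        refine (hmemφ _).mpr ?_
        simpa only [List.drop_length, relRange_nil, List.append_nil] using hm
  · by_cases c₂ : δ <+: β ∧ (X ∩ Λ.relRange B (β.drop δ.length)).Nonempty
    · rw [smm₂ c₂.1 c₂.2]
      constructor
      · intro h; exact Or.inr ⟨c₂.1, (hmemφ _).mp h⟩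
      · rintro (⟨hβδ, hm⟩ | ⟨-, hm⟩)
        · exact absurd ⟨hβδ, (mem_mk_facts hf hm).2.2⟩ c₁
        · exact (hmemφ _).mpr hm
    · rw [smm₀ c₁ c₂, hchar.2.2.1]
      constructor
      · intro h; exact absurd h (by simp)
      · rintro (⟨hβδ, hm⟩ | ⟨hδβ, hm⟩)
        · exact absurd ⟨hβδ, (mem_mk_facts hf hm).2.2⟩ c₁
        · exact absurd ⟨hδβ, (mem_mk_facts hf hm).2.2⟩ c₂

end Theta

/-- Let `(t, φ) ∈ Ω` with `t = (β, X, γ)`, and let `ξ^α` be the tight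
filter associated with `φ`, with `α = γα'`. Then `H_{[γ]α'}(ξ^α)` lies in the domain
`T^{(β)α'}` of `G_{(β)α'}` (so `η = (G_{(β)α'} ∘ H_{[γ]α'})(ξ^α)` is well defined), and
`η` is the filter of the character `θ_t(φ)`: for all `e ∈ E(S)`, `θ_t(φ)(e) = 1 ↔ e ∈ η`. -/
theorem statement_9 (hΛ : Λ.IsNormal) (β γ : List A) (X : Set V) (φ : Tr V A → Bool)
    (hΩ : (Tr.mk β X γ, φ) ∈ Λ.Omega) (ξ : Set (Tr V A)) (hξ : ξ = {e | φ e = true})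
    (hξt : Λ.IsTightFilter ξ) (α' : Word A) (hα' : Λ.IsWordW α')
    (hw : Λ.HasWord ξ (wappend γ α')) :
    Λ.Hcut γ ξ ∈ Λ.TGlueDom β α' ∧
    ∀ e : Tr V A, Λ.theta (Tr.mk β X γ) φ e = true ↔ e ∈ Λ.Gglue β (Λ.Hcut γ ξ) := by
  have hW := hΛ.toIsWLR
  have hLS := hW.toIsLS
  obtain ⟨hSS, hφtight, hφss⟩ := hΩ
  have hchar : Λ.IsChar φ := hφtight.1
  have hf : Λ.IsFilterES ξ := hξt.1
  have hmemφ : ∀ t : Tr V A, φ t = true ↔ t ∈ ξ := fun t => by rw [hξ]; exact Iff.rfl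
  -- facts from membership in `S`
  rcases hSS with h0 | ⟨a₀, X₀, b₀, heq, hβL, hγL, hXβ, hXγ, hXne⟩
  · exact absurd h0 (by simp)
  rw [Tr.mk.injEq] at heq
  obtain ⟨h1, h2, h3⟩ := heq
  rw [← h1] at hβL hXβ
  rw [← h3] at hγL hXγ
  rw [← h2] at hXβ hXγ hXne
  clear h1 h2 h3
  -- `(γ, X, γ) ∈ ξ`
  have hγXξ : Tr.mk γ X γ ∈ ξ := by
    have ht : Λ.tmul (Tr.tstar (Tr.mk β X γ)) (Tr.mk β X γ) = Tr.mk γ X γ := by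
      show Λ.tmul (Tr.mk γ X β) (Tr.mk β X γ) = Tr.mk γ X γ
      rw [tmul_mk, if_pos ⟨List.prefix_refl β, by
        simpa only [List.drop_length, relRange_nil, Set.inter_self] using hXne⟩]
      simp only [List.drop_length, relRange_nil, Set.inter_self, List.append_nil]
    rw [ht] at hφss
    exact (hmemφ _).mp hφss
  have hζf : Λ.IsFilterES (Λ.Hcut γ ξ) := isFilter_Hcut hW hf hγXξ
  have hHm : ∀ {δ₁ : List A} {B₁ : Set V}, Tr.mk δ₁ B₁ δ₁ ∈ Λ.Hcut γ ξ ↔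
      B₁ ∈ Λ.Aset δ₁ ∧ Tr.mk (γ ++ δ₁) (B₁ ∩ Λ.rangeL (γ ++ δ₁)) (γ ++ δ₁) ∈ ξ :=
    fun {δ₁ B₁} => mem_Hcut_iff hLS hf γ
  have hθnotE : ∀ {e : Tr V A}, e ∉ Λ.ESet → Λ.theta (Tr.mk β X γ) φ e = false := by
    intro e he
    simp only [LblSp.theta]
    rw [if_neg he]
  constructor
  · -- Part 1
    refine ⟨⟨hζf, charOf_Hcut_tight hW hξt hγXξ⟩, hasWord_Hcut hLS hf hw, ?_⟩
    intro hβne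
    refine hHm.mpr ⟨⟨hLS.range_mem β hβL hβne, by rw [rangeL_nil]; exact Set.subset_univ _⟩, ?_⟩
    simp only [List.nil_append, List.append_nil]
    exact filter_up_level hf hγXξ
      (inter_rangeL_mem hLS (hLS.range_mem β hβL hβne) hγL)
      Set.inter_subset_right (Set.subset_inter hXβ.2 hXγ.2)
  -- Part 2
  intro e
  rcases eq_or_ne β [] with rfl | hβne
  · -- β = ω
    unfold LblSp.Gglue
    rw [if_pos rfl]
    rcases e with _ | ⟨δ, B, δ''⟩
    · rw [theta_zero hchar]
      constructor
      · intro h; exact absurd h (by simp)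
      · intro h
        obtain ⟨δ, B, heq2⟩ := mem_Hcut_shape hf γ h
        exact absurd heq2 (by simp)
    · by_cases hE : Tr.mk δ B δ'' ∈ Λ.ESet
      · obtain ⟨hδ''δ, hδL, hBA, hBne⟩ := mem_ESet_mk.mp hE
        rw [hδ''δ] at hE ⊢
        rw [theta_true_iff hchar hf hmemφ hE]
        simp only [List.length_nil, List.drop_zero, List.drop_nil]
        constructor
        · rintro (⟨-, hm⟩ | ⟨hδnil, hm⟩)
          · obtain ⟨hγδL, -, -⟩ := mem_mk_facts hf hm
            refine hHm.mpr ⟨hBA, ?_⟩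
            refine filter_up_level hf hm (inter_rangeL_mem hLS hBA.1 hγδL)
              Set.inter_subset_right ?_
            intro v hv
            refine ⟨hv.2, ?_⟩
            have h4 := relRange_mono hXγ.2 δ hv.1
            rwa [← rangeL_append] at h4
          · have hδe : δ = [] := List.prefix_nil.mp hδnil
            subst hδe
            rw [relRange_nil] at hm
            refine hHm.mpr ⟨hBA, ?_⟩
            simp only [List.append_nil]
            refine filter_up_level hf hm (inter_rangeL_mem hLS hBA.1 hγL)
              Set.inter_subset_right ?_
            intro v hv
            exact ⟨hv.2, hXγ.2 hv.1⟩
        · intro hmem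
          obtain ⟨hBA', hm⟩ := hHm.mp hmem
          obtain ⟨hγδL, -, -⟩ := mem_mk_facts hf hm
          left
          refine ⟨List.nil_prefix, ?_⟩
          have hprod := filter_mul_of_prefix hf hγXξ hm (List.prefix_append γ δ)
          rw [List.drop_left] at hprod
          refine filter_up_level hf hprod
            (hLS.inter_mem _ (relRange_mem' hLS hXγ.1 (LStar_append_right hγδL)) _ hBA.1)
            ?_ ?_
          · intro v hv
            have h4 := relRange_mono hXγ.2 δ hv.1
            rwa [← rangeL_append] at h4
          · intro v hv
            exact ⟨hv.1, hv.2.1⟩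
      · rw [hθnotE hE]
        constructor
        · intro h; exact absurd h (by simp)
        · intro h; exact absurd (hζf.2.1 _ h).1 hE
  · -- β ≠ ω
    unfold LblSp.Gglue
    rw [if_neg hβne]
    by_cases hcond : ∃ (δ₁ : List A) (B₁ : Set V), δ₁ ≠ [] ∧ Tr.mk δ₁ B₁ δ₁ ∈ Λ.Hcut γ ξ
    · rw [if_pos hcond]
      -- the first letter of the word of `Hcut γ ξ`
      obtain ⟨δ₀, B₀, hδ₀ne, hB₀⟩ := hcond
      obtain ⟨hδ₀L, hB₀A, hB₀ne⟩ := mem_mk_facts hζf hB₀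
      set b := δ₀.head hδ₀ne with hbdef
      have hbpre : [b] <+: δ₀ := ⟨δ₀.tail, List.cons_head_tail hδ₀ne⟩
      have hbL : [b] ∈ Λ.LStar := LStar_prefix hbpre hδ₀L
      have hrbA : Λ.rangeL [b] ∈ Λ.𝒜 := hLS.range_mem _ hbL (by simp)
      have hbζ : Tr.mk [b] (Λ.rangeL [b]) [b] ∈ Λ.Hcut γ ξ := by
        refine filter_up hζf hB₀ hbpre hrbA Set.Subset.rfl ?_
        have h4 : Λ.rangeL δ₀ = Λ.relRange (Λ.rangeL [b]) (δ₀.drop [b].length) := by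
          rw [← rangeL_append, prefix_append_drop hbpre]
        rw [← h4]
        exact hB₀A.2
      obtain ⟨-, hbξ⟩ := hHm.mp hbζ
      obtain ⟨hγbL, -, -⟩ := mem_mk_facts hf hbξ
      -- key constructions
      have key1 : ∀ (δ : List A) (B : Set V), β <+: δ → β ≠ δ → δ ∈ Λ.LStar →
          B ∈ Λ.Aset δ →
          Tr.mk (γ ++ δ.drop β.length) (Λ.relRange X (δ.drop β.length) ∩ B)
            (γ ++ δ.drop β.length) ∈ ξ →
          ∃ C, Tr.mk (δ.drop β.length) C (δ.drop β.length) ∈ Λ.Hcut γ ξ ∧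
            B = C ∩ Λ.rangeL δ := by
        intro δ B hβδ hne hδL hBA hm
        have hδ'ne : δ.drop β.length ≠ [] := by
          intro h4
          apply hne
          have h5 := prefix_append_drop hβδ
          rw [h4, List.append_nil] at h5
          exact h5
        obtain ⟨hγδ'L, hsA, hsne⟩ := mem_mk_facts hf hm
        have hδ'L : δ.drop β.length ∈ Λ.LStar := LStar_append_right hγδ'L
        have hδne2 : δ ≠ [] := fun h4 => hβne (List.prefix_nil.mp (h4 ▸ hβδ))
        have hrδ'A : Λ.rangeL (δ.drop β.length) ∈ Λ.𝒜 := hLS.range_mem _ hδ'L hδ'ne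
        have hrδA : Λ.rangeL δ ∈ Λ.𝒜 := hLS.range_mem _ hδL hδne2
        have hBrδ' : B ⊆ Λ.rangeL (δ.drop β.length) := by
          refine hBA.2.trans ?_
          intro v hv
          rw [← prefix_append_drop hβδ] at hv
          exact rangeL_append_subset β _ hv
        have hCA : B ∪ (Λ.rangeL (δ.drop β.length) \ Λ.rangeL δ) ∈ Λ.𝒜 :=
          hLS.union_mem _ hBA.1 _ (hΛ.sdiff_mem _ hrδ'A _ hrδA)
        refine ⟨B ∪ (Λ.rangeL (δ.drop β.length) \ Λ.rangeL δ), ?_, ?_⟩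
        · refine hHm.mpr ⟨⟨hCA, Set.union_subset hBrδ' Set.diff_subset⟩, ?_⟩
          refine filter_up_level hf hm (inter_rangeL_mem hLS hCA hγδ'L)
            Set.inter_subset_right ?_
          intro v hv
          refine ⟨Set.subset_union_left hv.2, ?_⟩
          have h4 := relRange_mono hXγ.2 (δ.drop β.length) hv.1
          rwa [← rangeL_append] at h4
        · have h4 : (B ∪ (Λ.rangeL (δ.drop β.length) \ Λ.rangeL δ)) ∩ Λ.rangeL δ = B := by
            rw [Set.union_inter_distrib_right, Set.inter_eq_left.mpr hBA.2,
              Set.diff_inter_self, Set.union_empty]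
          exact h4.symm
      have key1' : ∀ (δ : List A) (B C : Set V), β <+: δ →
          Tr.mk (δ.drop β.length) C (δ.drop β.length) ∈ Λ.Hcut γ ξ →
          B = C ∩ Λ.rangeL δ →
          Tr.mk (γ ++ δ.drop β.length) (Λ.relRange X (δ.drop β.length) ∩ B)
            (γ ++ δ.drop β.length) ∈ ξ := by
        intro δ B C hβδ hCζ hBeq
        obtain ⟨hCA, hN⟩ := hHm.mp hCζ
        have hP := filter_mul_of_prefix hf hγXξ hN (List.prefix_append γ (δ.drop β.length))
        rw [List.drop_left] at hP
        have hey : Λ.relRange X (δ.drop β.length) ∩ (C ∩ Λ.rangeL (γ ++ δ.drop β.length)) =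
            Λ.relRange X (δ.drop β.length) ∩ B := by
          rw [hBeq]
          ext v
          constructor
          · rintro ⟨hv1, hv2, hv3⟩
            refine ⟨hv1, hv2, ?_⟩
            have h4 := relRange_mono hXβ.2 (δ.drop β.length) hv1
            rwa [← rangeL_append, prefix_append_drop hβδ] at h4
          · rintro ⟨hv1, hv2, hv3⟩
            refine ⟨hv1, hv2, ?_⟩
            have h4 := relRange_mono hXγ.2 (δ.drop β.length) hv1
            rwa [← rangeL_append] at h4
        rwa [hey] at hP
      have key2 : ∀ (δ₁ : List A) (B₁ : Set V), δ₁ <+: β → B₁ ∈ Λ.Aset δ₁ →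
          Tr.mk γ (X ∩ Λ.relRange B₁ (β.drop δ₁.length)) γ ∈ ξ →
          ∃ (b₂ : A) (C : Set V), Tr.mk [b₂] C [b₂] ∈ Λ.Hcut γ ξ ∧
            Λ.relRange B₁ (β.drop δ₁.length ++ [b₂]) = C ∩ Λ.rangeL (β ++ [b₂]) := by
        intro δ₁ B₁ hδ₁β hB₁A hT
        have hβ''L : β.drop δ₁.length ∈ Λ.LStar := LStar_drop hβL _
        have hE := filter_mul_of_prefix hf hT hbξ (List.prefix_append γ [b])
        rw [List.drop_left] at hE
        have hEne := (mem_mk_facts hf hE).2.2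
        have hAsubR : Λ.relRange (X ∩ Λ.relRange B₁ (β.drop δ₁.length)) [b] ⊆
            Λ.relRange B₁ (β.drop δ₁.length ++ [b]) := by
          rw [← relRange_comp]
          exact relRange_mono Set.inter_subset_right [b]
        have hRne : (Λ.relRange B₁ (β.drop δ₁.length ++ [b])).Nonempty :=
          ((hEne.mono Set.inter_subset_left).mono hAsubR)
        have hβ''bL : β.drop δ₁.length ++ [b] ∈ Λ.LStar := LStar_of_relRange_nonempty hRne
        have hRA : Λ.relRange B₁ (β.drop δ₁.length ++ [b]) ∈ Λ.𝒜 :=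
          relRange_mem' hLS hB₁A.1 hβ''bL
        have hRsub : Λ.relRange B₁ (β.drop δ₁.length ++ [b]) ⊆ Λ.rangeL (β ++ [b]) := by
          have h4 : δ₁ ++ (β.drop δ₁.length ++ [b]) = β ++ [b] := by
            rw [← List.append_assoc, prefix_append_drop hδ₁β]
          intro v hv
          have h5 := relRange_mono hB₁A.2 (β.drop δ₁.length ++ [b]) hv
          rwa [← rangeL_append, h4] at h5
        have hβbL : β ++ [b] ∈ Λ.LStar := LStar_of_rangeL_nonempty (hRne.mono hRsub)
        set C := Λ.relRange B₁ (β.drop δ₁.length ++ [b]) ∪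
          (Λ.rangeL [b] \ Λ.rangeL (β ++ [b])) with hCdef
        have hCA : C ∈ Λ.𝒜 :=
          hLS.union_mem _ hRA _ (hΛ.sdiff_mem _ hrbA _ (hLS.range_mem _ hβbL (by simp)))
        have hCr : C ⊆ Λ.rangeL [b] := by
          refine Set.union_subset ?_ Set.diff_subset
          refine (relRange_subset_rangeL _ _).trans ?_
          exact rangeL_append_subset _ [b]
        have hCcap : C ∩ Λ.rangeL (β ++ [b]) = Λ.relRange B₁ (β.drop δ₁.length ++ [b]) := by
          rw [hCdef, Set.union_inter_distrib_right, Set.inter_eq_left.mpr hRsub,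
            Set.diff_inter_self, Set.union_empty]
        refine ⟨b, C, ?_, hCcap.symm⟩
        refine hHm.mpr ⟨⟨hCA, hCr⟩, ?_⟩
        refine filter_up_level hf hE (inter_rangeL_mem hLS hCA hγbL)
          Set.inter_subset_right ?_
        intro v hv
        exact ⟨Set.subset_union_left (hAsubR hv.1), hv.2.2⟩
      have key2' : ∀ (δ₁ : List A) (B₁ : Set V) (b₂ : A) (C : Set V), δ₁ <+: β →
          B₁ ∈ Λ.Aset δ₁ → Tr.mk [b₂] C [b₂] ∈ Λ.Hcut γ ξ →
          Λ.relRange B₁ (β.drop δ₁.length ++ [b₂]) = C ∩ Λ.rangeL (β ++ [b₂]) →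
          Tr.mk γ (X ∩ Λ.relRange B₁ (β.drop δ₁.length)) γ ∈ ξ := by
        intro δ₁ B₁ b₂ C hδ₁β hB₁A hCζ hCeq
        obtain ⟨hCA, hN⟩ := hHm.mp hCζ
        obtain ⟨hγb₂L, -, -⟩ := mem_mk_facts hf hN
        have hE₁ := filter_mul_of_prefix hf hγXξ hN (List.prefix_append γ [b₂])
        rw [List.drop_left] at hE₁
        have hβ''L : β.drop δ₁.length ∈ Λ.LStar := LStar_drop hβL _
        have hb₂L : [b₂] ∈ Λ.LStar := LStar_append_right hγb₂L
        refine filter_up hf hE₁ (List.prefix_append γ [b₂])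
          (hLS.inter_mem _ hXγ.1 _ (relRange_mem' hLS hB₁A.1 hβ''L))
          (Set.inter_subset_left.trans hXγ.2) ?_
        rw [List.drop_left,
          hW.wlr X hXγ.1 _ (relRange_mem' hLS hB₁A.1 hβ''L) [b₂] hb₂L (by simp),
          relRange_comp, hCeq]
        intro v hv
        refine ⟨hv.1, hv.2.1, ?_⟩
        have h4 := relRange_mono hXβ.2 [b₂] hv.1
        rwa [← rangeL_append] at h4
      -- case analysis on `e`
      rcases e with _ | ⟨δ, B, δ''⟩
      · rw [theta_zero hchar]
        constructor
        · intro h; exact absurd h (by simp)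
        · rintro ⟨δ₂, B₂, heq2, -⟩
          exact absurd heq2 (by simp)
      · by_cases hE : Tr.mk δ B δ'' ∈ Λ.ESet
        · obtain ⟨hδ''δ, hδL, hBA, hBne⟩ := mem_ESet_mk.mp hE
          rw [hδ''δ] at hE ⊢
          rw [theta_true_iff hchar hf hmemφ hE]
          constructor
          · rintro (⟨hβδ, hm⟩ | ⟨hδβ, hm⟩)
            · by_cases hβδeq : β = δ
              · have hm' : Tr.mk γ (X ∩ Λ.relRange B (β.drop δ.length)) γ ∈ ξ := by
                  rw [← hβδeq] at hm ⊢
                  simpa only [List.drop_length, relRange_nil, List.append_nil] using hm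
                obtain ⟨b₂, C, hC1, hC2⟩ :=
                  key2 δ B (hβδeq ▸ List.prefix_refl β) hBA hm'
                exact ⟨δ, B, rfl, Or.inr ⟨hβδeq ▸ List.prefix_refl β, hBA, b₂, C, hC1, hC2⟩⟩
              · obtain ⟨C, hC1, hC2⟩ := key1 δ B hβδ hβδeq hδL hBA hm
                exact ⟨δ, B, rfl, Or.inl ⟨hβδ, hβδeq, C, hC1, hC2⟩⟩
            · obtain ⟨b₂, C, hC1, hC2⟩ := key2 δ B hδβ hBA hm
              exact ⟨δ, B, rfl, Or.inr ⟨hδβ, hBA, b₂, C, hC1, hC2⟩⟩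
          · rintro ⟨δ₂, B₂, heq2, hcase⟩
            rw [Tr.mk.injEq] at heq2
            obtain ⟨h1, h2, -⟩ := heq2
            rw [← h1, ← h2] at hcase
            rcases hcase with ⟨hβδ, hβδne, C, hC1, hC2⟩ | ⟨hδβ, hBA2, b₂, C, hC1, hC2⟩
            · exact Or.inl ⟨hβδ, key1' _ _ C hβδ hC1 hC2⟩
            · exact Or.inr ⟨hδβ, key2' _ _ b₂ C hδβ hBA2 hC1 hC2⟩
        · rw [hθnotE hE]
          constructor
          · intro h; exact absurd h (by simp)
          · rintro ⟨δ₂, B₂, heq2, hcase⟩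
            exfalso
            rw [heq2] at hE
            apply hE
            rcases hcase with ⟨hβδ, hβδne, C, hC1, hC2⟩ | ⟨hδβ, hBA2, b₂, C, hC1, hC2⟩
            · have hP := key1' _ _ C hβδ hC1 hC2
              have hPne := (mem_mk_facts hf hP).2.2
              have hBne : B₂.Nonempty := hPne.mono Set.inter_subset_right
              have hBsub : B₂ ⊆ Λ.rangeL δ₂ := by rw [hC2]; exact Set.inter_subset_right
              have hδL : δ₂ ∈ Λ.LStar := LStar_of_rangeL_nonempty (hBne.mono hBsub)
              have hδne2 : δ₂ ≠ [] := fun h4 => hβne (List.prefix_nil.mp (h4 ▸ hβδ))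
              have hCA := (hHm.mp hC1).1.1
              refine mk_mem_ESet hδL ⟨?_, hBsub⟩ hBne
              rw [hC2]
              exact hLS.inter_mem _ hCA _ (hLS.range_mem _ hδL hδne2)
            · have hP := key2' _ _ b₂ C hδβ hBA2 hC1 hC2
              have hPne := (mem_mk_facts hf hP).2.2
              have hBne : B₂.Nonempty :=
                nonempty_of_relRange (hPne.mono Set.inter_subset_right)
              exact mk_mem_ESet (LStar_prefix hδβ hβL) hBA2 hBne
    · rw [if_neg hcond]
      have key3 : ∀ (δ₁ : List A) (B₁ : Set V), δ₁ <+: β → B₁ ∈ Λ.Aset δ₁ →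
          Tr.mk γ (X ∩ Λ.relRange B₁ (β.drop δ₁.length)) γ ∈ ξ →
          ∃ C, Tr.mk [] C [] ∈ Λ.Hcut γ ξ ∧
            Λ.relRange B₁ (β.drop δ₁.length) = C ∩ Λ.rangeL β := by
        intro δ₁ B₁ hδ₁β hB₁A hT
        have hβ''L : β.drop δ₁.length ∈ Λ.LStar := LStar_drop hβL _
        have hCA : Λ.relRange B₁ (β.drop δ₁.length) ∈ Λ.𝒜 := relRange_mem' hLS hB₁A.1 hβ''L
        have hCsub : Λ.relRange B₁ (β.drop δ₁.length) ⊆ Λ.rangeL β := by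
          intro v hv
          have h4 := relRange_mono hB₁A.2 (β.drop δ₁.length) hv
          rwa [← rangeL_append, prefix_append_drop hδ₁β] at h4
        refine ⟨Λ.relRange B₁ (β.drop δ₁.length), ?_, (Set.inter_eq_left.mpr hCsub).symm⟩
        refine hHm.mpr ⟨⟨hCA, by rw [rangeL_nil]; exact Set.subset_univ _⟩, ?_⟩
        simp only [List.append_nil]
        refine filter_up_level hf hT (inter_rangeL_mem hLS hCA hγL)
          Set.inter_subset_right ?_
        intro v hv
        exact ⟨hv.2, hXγ.2 hv.1⟩
      have key3' : ∀ (δ₁ : List A) (B₁ C : Set V), δ₁ <+: β → B₁ ∈ Λ.Aset δ₁ →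
          Tr.mk [] C [] ∈ Λ.Hcut γ ξ →
          Λ.relRange B₁ (β.drop δ₁.length) = C ∩ Λ.rangeL β →
          Tr.mk γ (X ∩ Λ.relRange B₁ (β.drop δ₁.length)) γ ∈ ξ := by
        intro δ₁ B₁ C hδ₁β hB₁A hCζ hCeq
        obtain ⟨hCA, hN⟩ := hHm.mp hCζ
        rw [List.append_nil] at hN
        have hprod := filter_mul_of_prefix hf hγXξ hN (List.prefix_refl γ)
        simp only [List.drop_length, relRange_nil] at hprod
        have hβ''L : β.drop δ₁.length ∈ Λ.LStar := LStar_drop hβL _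
        refine filter_up_level hf hprod
          (hLS.inter_mem _ hXγ.1 _ (relRange_mem' hLS hB₁A.1 hβ''L))
          (Set.inter_subset_left.trans hXγ.2) ?_
        intro v hv
        refine ⟨hv.1, ?_⟩
        rw [hCeq]
        exact ⟨hv.2.1, hXβ.2 hv.1⟩
      rcases e with _ | ⟨δ, B, δ''⟩
      · rw [theta_zero hchar]
        constructor
        · intro h; exact absurd h (by simp)
        · rintro ⟨δ₂, B₂, heq2, -⟩
          exact absurd heq2 (by simp)
      · by_cases hE : Tr.mk δ B δ'' ∈ Λ.ESet
        · obtain ⟨hδ''δ, hδL, hBA, hBne⟩ := mem_ESet_mk.mp hE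
          rw [hδ''δ] at hE ⊢
          rw [theta_true_iff hchar hf hmemφ hE]
          constructor
          · rintro (⟨hβδ, hm⟩ | ⟨hδβ, hm⟩)
            · by_cases hβδeq : β = δ
              · have hm' : Tr.mk γ (X ∩ Λ.relRange B (β.drop δ.length)) γ ∈ ξ := by
                  rw [← hβδeq] at hm ⊢
                  simpa only [List.drop_length, relRange_nil, List.append_nil] using hm
                obtain ⟨C, hC1, hC2⟩ := key3 δ B (hβδeq ▸ List.prefix_refl β) hBA hm'
                exact ⟨δ, B, rfl, hβδeq ▸ List.prefix_refl β, hBA, C, hC1, hC2⟩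
              · exfalso
                obtain ⟨hγδ'L, hsA, hsne⟩ := mem_mk_facts hf hm
                have hδ'ne : δ.drop β.length ≠ [] := by
                  intro h4
                  apply hβδeq
                  have h5 := prefix_append_drop hβδ
                  rw [h4, List.append_nil] at h5
                  exact h5
                refine hcond ⟨δ.drop β.length, Λ.relRange X (δ.drop β.length) ∩ B, hδ'ne,
                  hHm.mpr ⟨⟨hsA.1, hsA.2.trans (rangeL_append_subset γ _)⟩, ?_⟩⟩
                rwa [Set.inter_eq_left.mpr hsA.2]
            · obtain ⟨C, hC1, hC2⟩ := key3 δ B hδβ hBA hm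
              exact ⟨δ, B, rfl, hδβ, hBA, C, hC1, hC2⟩
          · rintro ⟨δ₂, B₂, heq2, hδβ, hBA2, C, hC1, hC2⟩
            rw [Tr.mk.injEq] at heq2
            obtain ⟨h1, h2, -⟩ := heq2
            rw [← h1] at hδβ hBA2 hC2
            rw [← h2] at hBA2 hC2
            exact Or.inr ⟨hδβ, key3' _ _ C hδβ hBA2 hC1 hC2⟩
        · rw [hθnotE hE]
          constructor
          · intro h; exact absurd h (by simp)
          · rintro ⟨δ₂, B₂, heq2, hδβ, hBA2, C, hC1, hC2⟩
            exfalso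
            rw [heq2] at hE
            apply hE
            have hP := key3' _ _ C hδβ hBA2 hC1 hC2
            have hPne := (mem_mk_facts hf hP).2.2
            have hBne : B₂.Nonempty :=
              nonempty_of_relRange (hPne.mono Set.inter_subset_right)
            exact mk_mem_ESet (LStar_prefix hδβ hβL) hBA2 hBne

end LblSp
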